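/- arXiv:1612.02636 — 5 statements merged into one kernel-verified Lean document; each statement's English description precedes it below -/
import Mathlib

section
/- Let m items be partitioned into n nonempty groups, where group x_i has size w_{x_i} (so w_{x_1} + ... + w_{x_n} = m). For a uniformly random permutation of the m items, define the first-occurrence order of the groups as the sequence of groups ordered by the position of the first item of each group in the permutation. Then for every ordering (x_1, x_2, ..., x_n) of the groups, the probability that the first-occurrence order equals (x_1, ..., x_n) is the product over i = 1, ..., n of w_{x_i} / (m - (w_{x_1} + ... + w_{x_{i-1}})). In other words, the first-occurrence order of groups in a uniformly random permutation is a probability-proportional-to-size-without-replacement (ppswor) sample of the groups according to the group sizes. -/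
open Finset

/-- auxiliary development --/
def fib {m n : ℕ} (u : Fin m → Fin n) (x : Fin n) : Finset (Fin m) :=
  univ.filter fun p => u p = x


def Agood (m n k : ℕ) (c : Fin n → ℕ) : Finset (Fin m → Fin n) :=
  univ.filter fun u => (∀ x, (fib u x).card = c x) ∧
    ∀ (p : Fin m) (i : Fin n), k ≤ (i : ℕ) → i < u p → ∃ q, q < p ∧ u q = i


lemma mem_Agood {m n k : ℕ} {c : Fin n → ℕ} {u : Fin m → Fin n} :
    u ∈ Agood m n k c ↔ (∀ x, (fib u x).card = c x) ∧
      ∀ (p : Fin m) (i : Fin n), k ≤ (i : ℕ) → i < u p → ∃ q, q < p ∧ u q = i := by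
  simp [Agood]


lemma fibcard_cons {m n : ℕ} (a : Fin n) (t : Fin m → Fin n) (x : Fin n) :
    (fib (Fin.cons a t) x).card = (if a = x then 1 else 0) + (fib t x).card := by
  classical
  simp only [fib, Finset.card_filter, Fin.sum_univ_succ, Fin.cons_zero, Fin.cons_succ]


lemma Q_cons_iff {m n k : ℕ} (a : Fin n) (t : Fin m → Fin n) (hak : (a : ℕ) ≤ k) :
    (∀ (p : Fin (m+1)) (i : Fin n), k ≤ (i : ℕ) → i < (Fin.cons a t : Fin (m+1) → Fin n) p →
        ∃ q, q < p ∧ (Fin.cons a t : Fin (m+1) → Fin n) q = i) ↔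
    (∀ (p : Fin m) (i : Fin n), (if (a : ℕ) = k then k+1 else k) ≤ (i : ℕ) → i < t p →
        ∃ q, q < p ∧ t q = i) := by
  have hkk' : k ≤ (if (a : ℕ) = k then k+1 else k) := by split <;> omega
  constructor
  · intro H p i hk' hi
    obtain ⟨q, hq, hq2⟩ := H p.succ i (le_trans hkk' hk') (by simpa using hi)
    rcases Fin.eq_zero_or_eq_succ q with rfl | ⟨q', rfl⟩
    · exfalso
      rw [Fin.cons_zero] at hq2
      subst hq2
      split at hk' <;> omega
    · exact ⟨q', by simpa [Fin.succ_lt_succ_iff] using hq,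
        by simpa using hq2⟩
  · intro H p i hk hi
    rcases Fin.eq_zero_or_eq_succ p with rfl | ⟨p', rfl⟩
    · exfalso
      rw [Fin.cons_zero] at hi
      rw [Fin.lt_def] at hi
      omega
    · rw [Fin.cons_succ] at hi
      by_cases hia : i = a
      · exact ⟨0, Fin.succ_pos p', by simpa using hia.symm⟩
      · have hk' : (if (a : ℕ) = k then k+1 else k) ≤ (i : ℕ) := by
          have : (i : ℕ) ≠ (a : ℕ) := fun h => hia (Fin.ext h)
          split <;> omega
        obtain ⟨q', hq', hq2⟩ := H p' i hk' hi
        exact ⟨q'.succ, by simpa [Fin.succ_lt_succ_iff] using hq', by simpa using hq2⟩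

lemma card_B (m n k : ℕ) (c : Fin n → ℕ) (j : Fin n) (hjk : (j : ℕ) ≤ k) (hcj : 1 ≤ c j) :
    ((Agood (m+1) n k c).filter fun u => u 0 = j).card
      = (Agood m n (if (j : ℕ) = k then k+1 else k) (Function.update c j (c j - 1))).card := by
  classical
  refine Finset.card_bij' (fun u _ => Fin.tail u) (fun t _ => Fin.cons j t) ?hi ?hj ?li ?ri
  case hi =>
    intro u hu
    rw [mem_filter, mem_Agood] at hu
    obtain ⟨⟨hfib, hQ⟩, hu0⟩ := hu
    have hcons : (Fin.cons j (Fin.tail u) : Fin (m+1) → Fin n) = u := by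
      rw [← hu0]; exact Fin.cons_self_tail u
    show Fin.tail u ∈ Agood m n (if (j : ℕ) = k then k + 1 else k) (Function.update c j (c j - 1))
    rw [mem_Agood]
    constructor
    · intro x
      have hfc := fibcard_cons j (Fin.tail u) x
      rw [hcons, hfib x] at hfc
      rcases eq_or_ne x j with rfl | hx
      · rw [Function.update_self]
        split_ifs at hfc with h
        · omega
        · exact absurd rfl h
      · rw [Function.update_of_ne hx]
        split_ifs at hfc with h
        · exact absurd h.symm hx
        · omega
    · rw [← Q_cons_iff j (Fin.tail u) hjk]
      rw [hcons]
      exact hQ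
  case hj =>
    intro t ht
    rw [mem_Agood] at ht
    obtain ⟨hfib, hQ⟩ := ht
    show Fin.cons j t ∈ filter (fun u => u 0 = j) (Agood (m+1) n k c)
    rw [mem_filter, mem_Agood]
    refine ⟨⟨?_, ?_⟩, by simp⟩
    · intro x
      rw [fibcard_cons j t x, hfib x]
      rcases eq_or_ne x j with rfl | hx
      · rw [Function.update_self]
        split_ifs with h
        · omega
        · exact absurd rfl h
      · rw [Function.update_of_ne hx]
        split_ifs with h
        · exact absurd h.symm hx
        · omega
    · rw [Q_cons_iff j t hjk]
      exact hQ
  case li =>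
    intro u hu
    rw [mem_filter] at hu
    show Fin.cons j (Fin.tail u) = u
    rw [← hu.2]; exact Fin.cons_self_tail u
  case ri =>
    intro t _
    show Fin.tail (Fin.cons j t : Fin (m+1) → Fin n) = t
    funext q
    simp [Fin.tail]

lemma B_empty_gt (m n k : ℕ) (c : Fin n → ℕ) (j : Fin n) (hjk : k < (j : ℕ)) :
    ((Agood (m+1) n k c).filter fun u => u 0 = j) = ∅ := by
  rw [Finset.filter_eq_empty_iff]
  intro u hu hu0
  rw [mem_Agood] at hu
  have hkn : k < n := lt_trans hjk j.isLt
  obtain ⟨q, hq, -⟩ := hu.2 0 ⟨k, hkn⟩ le_rfl (by rw [hu0, Fin.lt_def]; exact hjk)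
  exact absurd hq (Fin.not_lt_zero q)

lemma B_empty_zero (m n k : ℕ) (c : Fin n → ℕ) (j : Fin n) (hcj : c j = 0) :
    ((Agood (m+1) n k c).filter fun u => u 0 = j) = ∅ := by
  rw [Finset.filter_eq_empty_iff]
  intro u hu hu0
  rw [mem_Agood] at hu
  have h0 : (0 : Fin (m+1)) ∈ fib u j := by simp [fib, hu0]
  have := hu.1 j
  rw [hcj, Finset.card_eq_zero] at this
  rw [this] at h0
  exact absurd h0 (Finset.notMem_empty _)


set_option maxHeartbeats 2000000 in
lemma key (m : ℕ) : ∀ {n : ℕ} (k : ℕ) (c : Fin n → ℕ),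
    (∀ i : Fin n, k ≤ (i : ℕ) → 1 ≤ c i) → (∑ i, c i = m) →
    ((Agood m n k c).card : ℝ) =
      ((m.factorial : ℝ) / ∏ i, ((c i).factorial : ℝ)) *
        ∏ i ∈ univ.filter (fun i : Fin n => k ≤ (i : ℕ)),
          ((c i : ℝ) / ∑ j ∈ univ.filter (fun j : Fin n => i ≤ j), (c j : ℝ)) := by
  induction m with
  | zero =>
    intro n k c hc hm
    have hc0 : ∀ i, c i = 0 := by
      intro i
      exact (Finset.sum_eq_zero_iff.mp hm) i (mem_univ i)
    have hfilter : univ.filter (fun i : Fin n => k ≤ (i : ℕ)) = ∅ := by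
      rw [Finset.filter_eq_empty_iff]
      intro i _ hk
      have := hc i hk
      have := hc0 i
      omega
    have hAgood : Agood 0 n k c = univ := by
      ext u
      simp only [mem_univ, iff_true, mem_Agood]
      refine ⟨fun x => ?_, fun p => p.elim0⟩
      rw [hc0 x]
      simp [fib]
    rw [hAgood, hfilter]
    simp [hc0, Finset.card_univ]
  | succ m ih =>
    intro n k c hc hm
    have hprodfac : (0 : ℝ) < ∏ i, ((c i).factorial : ℝ) :=
      Finset.prod_pos fun i _ => by exact_mod_cast (c i).factorial_pos
    set X : ℝ := (m.factorial : ℝ) / ∏ i, ((c i).factorial : ℝ) with hX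
    set PRk : ℝ := ∏ i ∈ univ.filter (fun i : Fin n => k ≤ (i : ℕ)),
          ((c i : ℝ) / ∑ j ∈ univ.filter (fun j : Fin n => i ≤ j), (c j : ℝ)) with hPRk
    set PRk1 : ℝ := ∏ i ∈ univ.filter (fun i : Fin n => k + 1 ≤ (i : ℕ)),
          ((c i : ℝ) / ∑ j ∈ univ.filter (fun j : Fin n => i ≤ j), (c j : ℝ)) with hPRk1
    clear_value X PRk PRk1
    -- sum of updated weights
    have hsum_update : ∀ j : Fin n, 1 ≤ c j →
        ∑ i, Function.update c j (c j - 1) i = m := by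
      intro j hcj
      rw [Finset.sum_update_of_mem (mem_univ j)]
      have h2 : c j + ∑ i ∈ univ \ {j}, c i = m + 1 := by
        rw [← hm, Finset.sdiff_singleton_eq_erase, Finset.add_sum_erase _ _ (mem_univ j)]
      omega
    -- factorial product of updated weights
    have hfac_update : ∀ j : Fin n, 1 ≤ c j →
        (∏ i, ((Function.update c j (c j - 1) i).factorial : ℝ)) * (c j : ℝ)
          = ∏ i, ((c i).factorial : ℝ) := by
      intro j hcj
      have h1 : (∏ i, ((Function.update c j (c j - 1) i).factorial : ℝ))
          = ((c j - 1).factorial : ℝ) * ∏ i ∈ univ \ {j}, ((c i).factorial : ℝ) := by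
        rw [← Finset.prod_update_of_mem (mem_univ j)
          (fun i => ((c i).factorial : ℝ)) (((c j - 1).factorial : ℝ))]
        apply Finset.prod_congr rfl
        intro i _
        rcases eq_or_ne i j with rfl | hij
        · rw [Function.update_self, Function.update_self]
        · rw [Function.update_of_ne hij, Function.update_of_ne hij]
      have h2 : (∏ i, ((c i).factorial : ℝ))
          = ((c j).factorial : ℝ) * ∏ i ∈ univ \ {j}, ((c i).factorial : ℝ) := by
        rw [Finset.sdiff_singleton_eq_erase, ← Finset.mul_prod_erase _ _ (mem_univ j)]
      have h3 : (c j : ℝ) * ((c j - 1).factorial : ℝ) = ((c j).factorial : ℝ) := by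
        exact_mod_cast congrArg (Nat.cast : ℕ → ℝ) (Nat.mul_factorial_pred (Nat.one_le_iff_ne_zero.mp hcj))
      rw [h1, h2, ← h3]
      ring
    -- fraction with updated factorials
    have hfrac : ∀ j : Fin n, 1 ≤ c j →
        (m.factorial : ℝ) / ∏ i, ((Function.update c j (c j - 1) i).factorial : ℝ)
          = (c j : ℝ) * X := by
      intro j hcj
      have hfu := hfac_update j hcj
      have hupos : (0:ℝ) < ∏ i, ((Function.update c j (c j - 1) i).factorial : ℝ) :=
        Finset.prod_pos fun i _ => by exact_mod_cast Nat.factorial_pos _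
      rw [hX]
      field_simp
      linear_combination -hfu
    -- updated product of ratios
    have hprod_update : ∀ (K : ℕ) (j : Fin n), (j : ℕ) < K →
        (∏ i ∈ univ.filter (fun i : Fin n => K ≤ (i : ℕ)),
          (((Function.update c j (c j - 1) i : ℕ) : ℝ) /
            ∑ l ∈ univ.filter (fun l : Fin n => i ≤ l),
              ((Function.update c j (c j - 1) l : ℕ) : ℝ)))
        = ∏ i ∈ univ.filter (fun i : Fin n => K ≤ (i : ℕ)),
            ((c i : ℝ) / ∑ l ∈ univ.filter (fun l : Fin n => i ≤ l), (c l : ℝ)) := by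
      intro K j hjK
      apply Finset.prod_congr rfl
      intro i hi
      rw [mem_filter] at hi
      have hij : i ≠ j := by
        intro h; subst h; omega
      have hnum : ((Function.update c j (c j - 1) i : ℕ) : ℝ) = (c i : ℝ) := by
        rw [Function.update_of_ne hij]
      have hden : ∑ l ∈ univ.filter (fun l : Fin n => i ≤ l),
          ((Function.update c j (c j - 1) l : ℕ) : ℝ)
          = ∑ l ∈ univ.filter (fun l : Fin n => i ≤ l), (c l : ℝ) := by
        apply Finset.sum_congr rfl
        intro l hl
        rw [mem_filter] at hl
        have hlj : l ≠ j := by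
          intro h; subst h
          have := hl.2
          rw [Fin.le_def] at this
          omega
        rw [Function.update_of_ne hlj]
      rw [hnum, hden]
    -- per-first-letter counting
    have hterm : ∀ j : Fin n,
        ((((Agood (m+1) n k c).filter fun u => u 0 = j).card : ℕ) : ℝ) =
          if (j : ℕ) < k then (c j : ℝ) * (X * PRk)
          else if (j : ℕ) = k then (c j : ℝ) * (X * PRk1)
          else 0 := by
      intro j
      rcases lt_trichotomy ((j : ℕ)) k with hj | hj | hj
      · rw [if_pos hj]
        rcases Nat.eq_zero_or_pos (c j) with hcj | hcj
        · rw [B_empty_zero m n k c j hcj]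
          simp [hcj]
        · have hci : ∀ i : Fin n, k ≤ (i : ℕ) → 1 ≤ Function.update c j (c j - 1) i := by
            intro i hi
            rw [Function.update_of_ne (by intro h; subst h; omega)]
            exact hc i hi
          rw [card_B m n k c j (le_of_lt hj) hcj, if_neg (by omega),
            ih k _ hci (hsum_update j hcj), hprod_update k j hj, hfrac j hcj, ← hPRk]
          ring
      · rw [if_neg (by omega), if_pos hj]
        have hcj : 1 ≤ c j := hc j (by omega)
        have hci : ∀ i : Fin n, k + 1 ≤ (i : ℕ) → 1 ≤ Function.update c j (c j - 1) i := by
          intro i hi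
          rw [Function.update_of_ne (by intro h; subst h; omega)]
          exact hc i (by omega)
        rw [card_B m n k c j (le_of_eq hj) hcj, if_pos hj,
          ih (k+1) _ hci (hsum_update j hcj), hprod_update (k+1) j (by omega), hfrac j hcj,
          ← hPRk1]
        ring
      · rw [if_neg (by omega), if_neg (by omega), B_empty_gt m n k c j hj]
        simp
    -- fiberwise count
    have hcard : ((Agood (m+1) n k c).card : ℝ)
        = ∑ j : Fin n, ((((Agood (m+1) n k c).filter fun u => u 0 = j).card : ℕ) : ℝ) := by
      have hc2 : (Agood (m+1) n k c).card
          = ∑ j : Fin n, ((Agood (m+1) n k c).filter fun u => u 0 = j).card :=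
        Finset.card_eq_sum_card_fiberwise (f := fun u : Fin (m+1) → Fin n => u 0) (t := univ)
          (fun u _ => mem_univ _)
      rw [hc2]; push_cast; rfl
    rw [hcard]
    have hsum2 : ∑ j : Fin n, ((((Agood (m+1) n k c).filter fun u => u 0 = j).card : ℕ) : ℝ)
        = ∑ j : Fin n, (if (j : ℕ) < k then (c j : ℝ) * (X * PRk)
            else if (j : ℕ) = k then (c j : ℝ) * (X * PRk1) else 0) :=
      Finset.sum_congr rfl fun j _ => hterm j
    rw [hsum2, ← Finset.sum_filter_add_sum_filter_not univ (fun j : Fin n => (j : ℕ) < k)]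
    have hfirst : ∑ j ∈ univ.filter (fun j : Fin n => (j : ℕ) < k),
        (if (j : ℕ) < k then (c j : ℝ) * (X * PRk)
            else if (j : ℕ) = k then (c j : ℝ) * (X * PRk1) else 0)
        = (∑ j ∈ univ.filter (fun j : Fin n => (j : ℕ) < k), (c j : ℝ)) * (X * PRk) := by
      rw [Finset.sum_mul]
      apply Finset.sum_congr rfl
      intro j hj
      rw [mem_filter] at hj
      rw [if_pos hj.2]
    rw [hfirst]
    by_cases hkn : k < n
    · set κ : Fin n := ⟨k, hkn⟩ with hκ
      clear_value κ
      have hsecond : ∑ j ∈ univ.filter (fun j : Fin n => ¬ (j : ℕ) < k),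
          (if (j : ℕ) < k then (c j : ℝ) * (X * PRk)
              else if (j : ℕ) = k then (c j : ℝ) * (X * PRk1) else 0)
          = (c κ : ℝ) * (X * PRk1) := by
        have hstep : ∀ j ∈ univ.filter (fun j : Fin n => ¬ (j : ℕ) < k),
            (if (j : ℕ) < k then (c j : ℝ) * (X * PRk)
                else if (j : ℕ) = k then (c j : ℝ) * (X * PRk1) else 0)
            = if j = κ then (c j : ℝ) * (X * PRk1) else 0 := by
          intro j hj
          rw [mem_filter] at hj
          rw [if_neg hj.2]
          congr 1
          simp [Fin.ext_iff, hκ]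
        rw [Finset.sum_congr rfl hstep, Finset.sum_ite_eq' _ κ]
        rw [if_pos (by simp [hκ])]
      rw [hsecond]
      -- algebraic finale
      have hinsert : univ.filter (fun i : Fin n => k ≤ (i : ℕ))
          = insert κ (univ.filter (fun i : Fin n => k + 1 ≤ (i : ℕ))) := by
        ext i
        simp only [mem_filter, mem_univ, true_and, mem_insert, Fin.ext_iff, hκ]
        omega
      have hκnot : κ ∉ univ.filter (fun i : Fin n => k + 1 ≤ (i : ℕ)) := by
        simp [hκ]
      have hPR : PRk = ((c κ : ℝ) /
          ∑ l ∈ univ.filter (fun l : Fin n => κ ≤ l), (c l : ℝ)) * PRk1 := by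
        rw [hPRk, hinsert, Finset.prod_insert hκnot, hPRk1]
      set T : ℝ := ∑ l ∈ univ.filter (fun l : Fin n => κ ≤ l), (c l : ℝ) with hT
      clear_value T
      have hfeq : univ.filter (fun j : Fin n => ¬ (j : ℕ) < k)
          = univ.filter (fun l : Fin n => κ ≤ l) := by
        apply Finset.filter_congr
        intro j _
        simp only [Fin.le_def, hκ]
        omega
      have hST : (∑ j ∈ univ.filter (fun j : Fin n => (j : ℕ) < k), (c j : ℝ)) + T
          = (m + 1 : ℝ) := by
        rw [hT, ← hfeq, Finset.sum_filter_add_sum_filter_not]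
        rw [← Nat.cast_sum]
        exact_mod_cast congrArg (Nat.cast : ℕ → ℝ) hm
      have hT1 : (1 : ℝ) ≤ T := by
        rw [hT]
        calc (1:ℝ) ≤ (c κ : ℝ) := by exact_mod_cast hc κ (by simp [hκ])
        _ ≤ _ := Finset.single_le_sum (f := fun l => (c l : ℝ))
            (fun l _ => by positivity) (by simp [hκ, Fin.le_def])
      have hTne : T ≠ 0 := by linarith
      rw [hPR]
      have hSval : (∑ j ∈ univ.filter (fun j : Fin n => (j : ℕ) < k), (c j : ℝ))
          = (m + 1 : ℝ) - T := by linarith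
      rw [hSval, hX, Nat.factorial_succ]
      push_cast
      field_simp
      ring
    · have hempty2 : univ.filter (fun j : Fin n => ¬ (j : ℕ) < k) = ∅ := by
        rw [Finset.filter_eq_empty_iff]
        intro j _
        have := j.isLt
        omega
      have hunivf : univ.filter (fun j : Fin n => (j : ℕ) < k) = univ := by
        apply Finset.filter_true_of_mem
        intro j _
        have := j.isLt
        omega
      have hSgeempty : univ.filter (fun i : Fin n => k ≤ (i : ℕ)) = ∅ := by
        rw [Finset.filter_eq_empty_iff]
        intro i _
        have := i.isLt
        omega
      rw [hempty2, Finset.sum_empty, hunivf]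
      have hSval : (∑ j : Fin n, (c j : ℝ)) = (m + 1 : ℝ) := by
        rw [← Nat.cast_sum]
        exact_mod_cast congrArg (Nat.cast : ℕ → ℝ) hm
      rw [hSval, hX]
      rw [hPRk, hSgeempty, Finset.prod_empty, Nat.factorial_succ]
      push_cast
      field_simp
      ring


lemma mem_fib {m n : ℕ} {u : Fin m → Fin n} {x : Fin n} {p : Fin m} :
    p ∈ fib u x ↔ u p = x := by simp [fib]

lemma Q_iff {m n : ℕ} (u : Fin m → Fin n) (hne : ∀ x, (fib u x).Nonempty) :
    (∀ i j : Fin n, i < j → (fib u i).min < (fib u j).min) ↔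
    (∀ (p : Fin m) (i : Fin n), 0 ≤ (i : ℕ) → i < u p → ∃ q, q < p ∧ u q = i) := by
  constructor
  · intro H p i _ hi
    have h1 : (fib u i).min < (fib u (u p)).min := H i (u p) hi
    have h2 : (fib u (u p)).min ≤ (↑p : WithTop (Fin m)) :=
      Finset.min_le (mem_fib.mpr rfl)
    set a := (fib u i).min' (hne i) with ha
    have h3 : (fib u i).min = (↑a : WithTop (Fin m)) := (Finset.coe_min' (hne i)).symm
    have h4 : (↑a : WithTop (Fin m)) < ↑p := lt_of_lt_of_le (h3 ▸ h1) h2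
    exact ⟨a, WithTop.coe_lt_coe.mp h4, mem_fib.mp ((fib u i).min'_mem (hne i))⟩
  · intro H i j hij
    set p := (fib u j).min' (hne j) with hp
    have hpj : u p = j := mem_fib.mp ((fib u j).min'_mem (hne j))
    obtain ⟨q, hq, hqi⟩ := H p i (Nat.zero_le _) (by rw [hpj]; exact hij)
    have h1 : (fib u i).min ≤ (↑q : WithTop (Fin m)) := Finset.min_le (mem_fib.mpr hqi)
    have h2 : (↑q : WithTop (Fin m)) < ↑p := WithTop.coe_lt_coe.mpr hq
    rw [← Finset.coe_min' (hne j), ← hp]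
    exact lt_of_le_of_lt h1 h2

lemma card_fib_comp {m n : ℕ} (σ : Equiv.Perm (Fin m)) (v : Fin m → Fin n) (x : Fin n) :
    (fib (v ∘ σ) x).card = (fib v x).card := by
  apply Finset.card_bij (fun p _ => σ p)
  · intro p hp
    rw [mem_fib] at hp ⊢
    exact hp
  · intro p _ q _ h
    exact σ.injective h
  · intro q hq
    exact ⟨σ.symm q, mem_fib.mpr (by rw [mem_fib] at hq; simpa using hq), by simp⟩

/-- permutations inducing a given word, counted -/
def permWordEquiv {m n : ℕ} (v u : Fin m → Fin n) :
    {σ : Equiv.Perm (Fin m) // v ∘ σ = u} ≃ (∀ x, {p // u p = x} ≃ {p // v p = x}) where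
  toFun σh x := σh.1.subtypeEquiv fun p => by
    have := congrFun σh.2 p
    simp only [Function.comp_apply] at this
    rw [← this]
  invFun e := ⟨((Equiv.sigmaFiberEquiv u).symm.trans (Equiv.sigmaCongrRight e)).trans
      (Equiv.sigmaFiberEquiv v),
    funext fun p => (e (u p) ⟨p, rfl⟩).2⟩
  left_inv σh := by
    apply Subtype.ext
    apply Equiv.ext
    intro p
    rfl
  right_inv e := by
    funext x
    apply Equiv.ext
    intro p
    obtain ⟨p', hp'⟩ := p
    subst hp'
    rfl

lemma card_perm_eq {m n : ℕ} (v u : Fin m → Fin n) (h : ∀ x, (fib u x).card = (fib v x).card) :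
    (univ.filter fun σ : Equiv.Perm (Fin m) => v ∘ σ = u).card
      = ∏ x, ((fib v x).card).factorial := by
  classical
  rw [← Fintype.card_subtype]
  rw [Fintype.card_congr (permWordEquiv v u), Fintype.card_pi]
  apply Finset.prod_congr rfl
  intro x _
  have hcu : Fintype.card {p // u p = x} = (fib u x).card := by
    rw [Fintype.card_subtype]; rfl
  have hcv : Fintype.card {p // v p = x} = (fib v x).card := by
    rw [Fintype.card_subtype]; rfl
  rw [Fintype.card_equiv (Fintype.equivOfCardEq (by rw [hcu, hcv, h x]))]
  rw [hcu, h x]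

set_option maxHeartbeats 2000000 in
/-- **ppswor from a uniformly random permutation.**
`m` items (`Fin m`) are partitioned into `n` nonempty groups by `g : Fin m → Fin n`
(nonemptyness = surjectivity of `g`), and `w x` is the size of group `x`.
A permutation `σ` of the items is drawn uniformly at random (i.e., we count the
permutations with the desired property and divide by `m!`).  The first-occurrence
order of the groups is the sequence of groups ordered by the position of the first
item of each group; it equals the ordering `(π 0, π 1, …, π (n-1))` iff for all
`i < j` the first position holding an item of group `π i` precedes the first
position holding an item of group `π j`.  The probability of this event is
`∏ i, w (π i) / (m - ∑_{j < i} w (π j))`, i.e., the first-occurrence order is a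
ppswor sample of the groups according to the group sizes. -/
theorem stmt_0 (m n : ℕ) (g : Fin m → Fin n) (hg : Function.Surjective g)
    (w : Fin n → ℕ) (hw : ∀ x, w x = (Finset.univ.filter fun p => g p = x).card)
    (π : Equiv.Perm (Fin n)) :
    (Nat.card {σ : Equiv.Perm (Fin m) //
        ∀ i j : Fin n, i < j →
          (Finset.univ.filter fun p => g (σ p) = π i).min <
            (Finset.univ.filter fun p => g (σ p) = π j).min} : ℝ) /
        (Nat.factorial m : ℝ) =
      ∏ i : Fin n,
        (w (π i) : ℝ) /
          ((m : ℝ) - ∑ j ∈ Finset.univ.filter (· < i), (w (π j) : ℝ)) := by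
  classical
  set g' : Fin m → Fin n := fun p => π.symm (g p) with hg'
  set W : Fin n → ℕ := fun x => (univ.filter fun p => g p = π x).card with hWdef
  have hW : ∀ x, w (π x) = W x := fun x => hw (π x)
  have hfibg' : ∀ x, fib g' x = univ.filter fun p => g p = π x := by
    intro x
    apply Finset.filter_congr
    intro p _
    simp [hg', Equiv.symm_apply_eq]
  have hWfib : ∀ x, (fib g' x).card = W x := fun x => by rw [hfibg' x]
  have hWpos : ∀ x, 1 ≤ W x := by
    intro x
    obtain ⟨p, hp⟩ := hg (π x)
    exact Nat.one_le_iff_ne_zero.mpr (Finset.card_ne_zero_of_mem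
      (mem_filter.mpr ⟨mem_univ p, hp⟩))
  have hsumW : ∑ x, W x = m := by
    have h1 : (univ : Finset (Fin m)).card
        = ∑ x : Fin n, (univ.filter fun p => g' p = x).card :=
      Finset.card_eq_sum_card_fiberwise (fun p _ => mem_univ _)
    have h2 : ∀ x, (univ.filter fun p => g' p = x).card = W x := fun x => hWfib x
    rw [Finset.sum_congr rfl fun x _ => h2 x] at h1
    rw [← h1, Finset.card_univ, Fintype.card_fin]
  have hfib' : ∀ (σ : Equiv.Perm (Fin m)) (x : Fin n),
      fib (g' ∘ σ) x = univ.filter fun p => g (σ p) = π x := by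
    intro σ x
    apply Finset.filter_congr
    intro p _
    simp [hg', Equiv.symm_apply_eq]
  have hE : ∀ σ : Equiv.Perm (Fin m),
      ((∀ i j : Fin n, i < j →
          (Finset.univ.filter fun p => g (σ p) = π i).min <
            (Finset.univ.filter fun p => g (σ p) = π j).min)
        ↔ g' ∘ σ ∈ Agood m n 0 W) := by
    intro σ
    have hne : ∀ x, (fib (g' ∘ σ) x).Nonempty := by
      intro x
      apply Finset.card_pos.mp
      rw [card_fib_comp, hWfib]
      exact hWpos x
    rw [mem_Agood]
    constructor
    · intro h
      refine ⟨fun x => by rw [card_fib_comp, hWfib], ?_⟩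
      apply (Q_iff _ hne).mp
      intro i j hij
      rw [hfib' σ i, hfib' σ j]
      exact h i j hij
    · rintro ⟨-, hQ⟩ i j hij
      rw [← hfib' σ i, ← hfib' σ j]
      exact (Q_iff _ hne).mpr hQ i j hij
  -- counting the numerator
  have hnum : (univ.filter fun σ : Equiv.Perm (Fin m) =>
        ∀ i j : Fin n, i < j →
          (Finset.univ.filter fun p => g (σ p) = π i).min <
            (Finset.univ.filter fun p => g (σ p) = π j).min).card
      = (Agood m n 0 W).card * ∏ x, (W x).factorial := by
    rw [Finset.card_eq_sum_card_fiberwise (f := fun σ : Equiv.Perm (Fin m) => g' ∘ σ) (t := Agood m n 0 W)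
      (fun σ hσ => (hE σ).mp (mem_filter.mp hσ).2)]
    rw [Finset.sum_congr rfl fun u hu => ?_, Finset.sum_const, smul_eq_mul]
    have hcards : ∀ x, (fib u x).card = (fib g' x).card := by
      intro x
      rw [hWfib, (mem_Agood.mp hu).1 x]
    have hflt : ((univ.filter fun σ : Equiv.Perm (Fin m) =>
        ∀ i j : Fin n, i < j →
          (Finset.univ.filter fun p => g (σ p) = π i).min <
            (Finset.univ.filter fun p => g (σ p) = π j).min).filter
          fun σ : Equiv.Perm (Fin m) => g' ∘ ⇑σ = u)
        = univ.filter fun σ : Equiv.Perm (Fin m) => g' ∘ ⇑σ = u := by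
      ext σ
      simp only [mem_filter, mem_univ, true_and]
      constructor
      · rintro ⟨-, h2⟩; exact h2
      · intro h2
        refine ⟨(hE σ).mpr ?_, h2⟩
        rw [h2]
        exact hu
    rw [hflt, card_perm_eq g' u hcards]
    exact Finset.prod_congr rfl fun x _ => by rw [hWfib]
  have hnatcard : (Nat.card {σ : Equiv.Perm (Fin m) //
      ∀ i j : Fin n, i < j →
        (Finset.univ.filter fun p => g (σ p) = π i).min <
          (Finset.univ.filter fun p => g (σ p) = π j).min})
      = (univ.filter fun σ : Equiv.Perm (Fin m) =>
        ∀ i j : Fin n, i < j →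
          (Finset.univ.filter fun p => g (σ p) = π i).min <
            (Finset.univ.filter fun p => g (σ p) = π j).min).card := by
    rw [Nat.card_eq_fintype_card, Fintype.card_subtype]
  rw [hnatcard, hnum]
  -- the key formula
  have hkey := key m 0 W (fun i _ => hWpos i) hsumW
  have huniv0 : univ.filter (fun i : Fin n => 0 ≤ (i : ℕ)) = univ :=
    Finset.filter_true_of_mem (fun _ _ => Nat.zero_le _)
  rw [huniv0] at hkey
  -- rewrite the target RHS
  have hRHS : ∀ i : Fin n,
      (w (π i) : ℝ) / ((m : ℝ) - ∑ j ∈ Finset.univ.filter (· < i), (w (π j) : ℝ))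
      = (W i : ℝ) / ∑ j ∈ univ.filter (fun j : Fin n => i ≤ j), (W j : ℝ) := by
    intro i
    have hden : (m : ℝ) - ∑ j ∈ Finset.univ.filter (· < i), (w (π j) : ℝ)
        = ∑ j ∈ univ.filter (fun j : Fin n => i ≤ j), (W j : ℝ) := by
      have hsplit := Finset.sum_filter_add_sum_filter_not univ
        (fun j : Fin n => j < i) (fun j => (W j : ℝ))
      have hmW : ∑ j : Fin n, (W j : ℝ) = (m : ℝ) := by
        rw [← Nat.cast_sum, hsumW]
      have hfeq : univ.filter (fun j : Fin n => ¬ j < i)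
          = univ.filter (fun j : Fin n => i ≤ j) := by
        apply Finset.filter_congr
        intro j _
        simp [not_lt]
      have hwW : ∑ j ∈ Finset.univ.filter (· < i), (w (π j) : ℝ)
          = ∑ j ∈ univ.filter (fun j : Fin n => j < i), (W j : ℝ) :=
        Finset.sum_congr rfl fun j _ => by rw [hW j]
      rw [hwW]
      rw [hfeq] at hsplit
      linarith [hsplit, hmW]
    rw [hden, hW i]
  rw [Finset.prod_congr rfl fun i _ => hRHS i]
  -- final algebra
  rw [Nat.cast_mul, hkey]
  have hcast : ((∏ x, (W x).factorial : ℕ) : ℝ) = ∏ x, ((W x).factorial : ℝ) := by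
    push_cast
    rfl
  rw [hcast]
  set F : ℝ := ∏ i, ((W i).factorial : ℝ) with hF
  set P : ℝ := ∏ i : Fin n,
      ((W i : ℝ) / ∑ j ∈ univ.filter (fun j : Fin n => i ≤ j), (W j : ℝ)) with hPdef
  have hFpos : (0 : ℝ) < F := by
    rw [hF]
    exact Finset.prod_pos fun i _ => by exact_mod_cast (W i).factorial_pos
  have hmfacpos : (0 : ℝ) < (m.factorial : ℝ) := by exact_mod_cast m.factorial_pos
  clear_value F P
  field_simp
end

section
/- Let m items be partitioned into n nonempty groups, where group x has size w_x and m is the total number of items, and assign to each item an independent Uniform[0,1] random value; define the seed of each group as the minimum of its items' values. Fix a group x and an integer k with 1 ≤ k ≤ n. Then the probability that the seed of group x is among the k smallest group seeds is at least 1 - (1 - w_x/m)^k. That is, in a fixed-size ppswor sample of k keys taken according to weights w_x, a key with weight w_x is selected with probability at least 1 - (1 - w_x/m)^k. -/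
open MeasureTheory ProbabilityTheory Set Finset

/-- The seed of group `x`: the minimum (in `WithTop ℝ`) of the values of the items
in group `x`. -/
noncomputable def groupSeed {Ω : Type*} {m n : ℕ} (g : Fin m → Fin n)
    (U : Fin m → Ω → ℝ) (x : Fin n) (ω : Ω) : WithTop ℝ :=
  (Finset.univ.filter fun p => g p = x).inf fun p => ((U p ω : ℝ) : WithTop ℝ)


section AuxArith
open Finset

lemma aux_nat (N m : ℕ) (h : N ≤ m) : ∀ k, N.descFactorial k * m^k ≤ m.descFactorial k * N^k := by
  intro k
  induction k with
  | zero => simp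
  | succ k ih =>
    rw [Nat.descFactorial_succ, Nat.descFactorial_succ, pow_succ, pow_succ]
    have h1 : (N - k) * m ≤ (m - k) * N := by
      rcases Nat.le_total N k with hNk | hNk
      · simp [Nat.sub_eq_zero_of_le hNk]
      · have key : (N - k) * m + k * N ≤ (m - k) * N + k * N := by
          rw [← Nat.add_mul, Nat.sub_add_cancel (hNk.trans h)]
          calc (N - k) * m + k * N ≤ (N - k) * m + k * m :=
                Nat.add_le_add_left (Nat.mul_le_mul_left _ h) _
            _ = N * m := by rw [← Nat.add_mul, Nat.sub_add_cancel hNk]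
            _ = m * N := Nat.mul_comm _ _
        exact Nat.le_of_add_le_add_right key
    calc (N - k) * N.descFactorial k * (m ^ k * m)
        = (N.descFactorial k * m ^ k) * ((N - k) * m) := by ring
      _ ≤ (m.descFactorial k * N ^ k) * ((m - k) * N) := Nat.mul_le_mul ih h1
      _ = (m - k) * m.descFactorial k * (N ^ k * N) := by ring

lemma aux_real (N m k : ℕ) (hN : N ≤ m) (hk : k ≤ m) (hm : 0 < m) :
    (N.choose k : ℝ) * ((k.factorial : ℝ) * (m-k).factorial / m.factorial) ≤ ((N:ℝ)/m)^k := by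
  have hnat : N.descFactorial k * m^k ≤ m.descFactorial k * N^k := aux_nat N m hN k
  have hfac : (m - k).factorial * m.descFactorial k = m.factorial :=
    Nat.factorial_mul_descFactorial hk
  have hdN : N.descFactorial k = k.factorial * N.choose k :=
    Nat.descFactorial_eq_factorial_mul_choose N k
  have hmf : (0:ℝ) < (m.factorial : ℝ) := by positivity
  have hmk : (0:ℝ) < ((m:ℝ))^k := by positivity
  rw [div_pow, mul_div_assoc', div_le_div_iff₀ hmf hmk]
  have : (N.choose k : ℝ) * ((k.factorial : ℝ) * (m-k).factorial) * (m:ℝ)^k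
      = ((N.descFactorial k * m^k : ℕ) : ℝ) * (m-k).factorial := by
    push_cast [hdN]
    ring
  rw [this]
  have : ((N:ℝ))^k * (m.factorial : ℝ) = ((m.descFactorial k * N^k : ℕ) : ℝ) * (m-k).factorial := by
    rw [← hfac]
    push_cast
    ring
  rw [this]
  have := Nat.cast_le (α := ℝ) |>.mpr hnat
  exact mul_le_mul_of_nonneg_right this (by positivity)


open scoped Classical in
lemma aux_cover {ι : Type*} [Fintype ι] [LinearOrder ι] (u : ι → ℝ) (I : Finset ι) (k : ℕ)
    (T : Finset ι) (hTcard : T.card = k) (hT : ∀ p ∈ T, ∀ q ∈ I, u p < u q) :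
    ∃ S : Finset ι, S.card = k ∧ (∀ p ∈ S, p ∉ I) ∧
      (∀ p ∈ S, ∀ q, q ∉ S → u p ≤ u q) := by
  set key : ι → ℝ ×ₗ ι := fun p => toLex (u p, p) with hkey
  have keyinj : Function.Injective key := by
    intro p q h
    have := congrArg (fun z => (ofLex z).2) h
    simpa [hkey] using this
  set rank : ι → ℕ := fun p => (Finset.univ.filter fun q => key q < key p).card with hrank
  have hmono : ∀ {p q}, key p < key q → rank p < rank q := by
    intro p q h
    apply Finset.card_lt_card
    constructor
    · intro r hr
      simp only [Finset.mem_filter, Finset.mem_univ, true_and] at hr ⊢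
      exact hr.trans h
    · intro hsub
      have hp : p ∈ Finset.univ.filter fun r => key r < key q := by
        simp [h]
      have := hsub hp
      simp at this
  have rankinj : Function.Injective rank := by
    intro p q h
    rcases lt_trichotomy (key p) (key q) with hlt | heq | hgt
    · exact absurd h (Nat.ne_of_lt (hmono hlt))
    · exact keyinj heq
    · exact absurd h.symm (Nat.ne_of_lt (hmono hgt))
  set M := Fintype.card ι with hM
  have hkM : k ≤ M := le_trans (le_of_eq hTcard.symm)
    (le_trans (Finset.card_le_univ T) (le_of_eq (Finset.card_univ)))
  have hrankM : ∀ p, rank p < M := by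
    intro p
    have : (Finset.univ.filter fun q => key q < key p) ⊆ Finset.univ.erase p := by
      intro r hr
      simp only [Finset.mem_filter, Finset.mem_univ, true_and] at hr
      simp only [Finset.mem_erase, Finset.mem_univ, and_true]
      exact fun h => absurd (h ▸ hr) (lt_irrefl _)
    calc rank p ≤ (Finset.univ.erase p).card := Finset.card_le_card this
      _ < Finset.univ.card := Finset.card_erase_lt_of_mem (Finset.mem_univ p)
      _ = M := Finset.card_univ
  set R : ι → Fin M := fun p => ⟨rank p, hrankM p⟩ with hR
  have Rinj : Function.Injective R := fun p q h => rankinj (congrArg Fin.val h)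
  have Rbij : Function.Bijective R := (Fintype.bijective_iff_injective_and_card R).2 ⟨Rinj, by simp [hM]⟩
  set S := Finset.univ.filter fun p => rank p < k with hS
  have hScard : S.card = k := by
    have himg : Finset.univ.filter (fun j : Fin M => (j : ℕ) < k) = S.image R := by
      ext j
      simp only [Finset.mem_filter, Finset.mem_univ, true_and, Finset.mem_image]
      constructor
      · intro hj
        obtain ⟨p, hp⟩ := Rbij.2 j
        refine ⟨p, ?_, hp⟩
        have hval : rank p = (j : ℕ) := congrArg Fin.val hp
        simp only [hS, Finset.mem_filter, Finset.mem_univ, true_and]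
        omega
      · rintro ⟨p, hp, rfl⟩
        simp only [hS, Finset.mem_filter, Finset.mem_univ, true_and] at hp
        exact hp
    have h1 : (S.image R).card = S.card := Finset.card_image_of_injective _ Rinj
    have h2 : (Finset.univ.filter (fun j : Fin M => (j : ℕ) < k)) =
        Finset.map (Fin.castLEEmb hkM) Finset.univ := by
      ext j
      simp only [Finset.mem_filter, Finset.mem_univ, true_and, Finset.mem_map]
      constructor
      · intro hj
        refine ⟨⟨j, hj⟩, ?_⟩
        first
        | exact ⟨Finset.mem_univ _, rfl⟩
        | exact rfl
        | simp [Fin.castLEEmb]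
      · rintro ⟨i, hi⟩
        have : ((Fin.castLEEmb hkM) i : Fin M) = j := by
          first | exact hi.2 | exact hi
        rw [← this]
        simpa using i.2
    have := congrArg Finset.card h2
    rw [himg, h1] at this
    simpa using this
  have hSW : ∀ p ∈ S, ∀ q ∈ I, u p < u q := by
    intro p hp
    simp only [hS, Finset.mem_filter, Finset.mem_univ, true_and] at hp
    by_contra hcon
    push_neg at hcon
    obtain ⟨q₀, hq₀I, hq₀⟩ := hcon
    have hsub : T ⊆ Finset.univ.filter fun r => key r < key p := by
      intro r hr
      simp only [Finset.mem_filter, Finset.mem_univ, true_and]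
      have : u r < u p := lt_of_lt_of_le (hT r hr q₀ hq₀I) hq₀
      exact Prod.Lex.lt_iff.2 (Or.inl this)
    have hcard := Finset.card_le_card hsub
    have hrp : (Finset.univ.filter fun r => key r < key p).card = rank p := rfl
    omega
  refine ⟨S, hScard, ?_, ?_⟩
  · intro p hp hpI
    exact absurd (hSW p hp p hpI) (lt_irrefl _)
  · intro p hp q hq
    simp only [hS, Finset.mem_filter, Finset.mem_univ, true_and] at hp
    have hqk : ¬ rank q < k := by
      intro hqlt
      exact hq (by simp only [hS, Finset.mem_filter, Finset.mem_univ, true_and]; exact hqlt)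
    rcases lt_trichotomy (key p) (key q) with hlt | heq | hgt
    · rcases Prod.Lex.lt_iff.1 hlt with h | h
      · exact le_of_lt h
      · exact le_of_eq h.1
    · exact le_of_eq (congrArg u (keyinj heq))
    · exact absurd hp (by have := hmono hgt; omega)


end AuxArith

section AuxMeasure
open MeasureTheory Set intervalIntegral

lemma aux_beta : ∀ (b a : ℕ), ∫ t in (0:ℝ)..1, t^a * (1-t)^b
    = (a.factorial * b.factorial : ℝ) / (a+b+1).factorial := by
  intro b
  induction b with
  | zero =>
    intro a
    simp [integral_pow, Nat.factorial_succ]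
    field_simp
  | succ b ih =>
    intro a
    have hu : ∀ t ∈ Set.uIcc (0:ℝ) 1, HasDerivAt (fun t : ℝ => (1-t)^(b+1))
        (-((b+1) * (1-t)^b)) t := by
      intro t _
      have h1 : HasDerivAt (fun t : ℝ => 1 - t) (-1) t := (hasDerivAt_id t).const_sub 1
      have := h1.pow (b+1)
      refine this.congr_deriv ?_
      push_cast
      ring
    have hv : ∀ t ∈ Set.uIcc (0:ℝ) 1, HasDerivAt (fun t : ℝ => t^(a+1)/(a+1)) (t^a) t := by
      intro t _
      have := (hasDerivAt_pow (a+1) t).div_const (a+1)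
      refine this.congr_deriv ?_
      field_simp
      rw [Nat.add_sub_cancel]
      push_cast
      ring
    have hiu : IntervalIntegrable (fun t : ℝ => -((b+1) * (1-t)^b)) volume 0 1 :=
      (Continuous.intervalIntegrable (by continuity) 0 1)
    have hiv : IntervalIntegrable (fun t : ℝ => t^a) volume 0 1 :=
      (Continuous.intervalIntegrable (by continuity) 0 1)
    have H := integral_mul_deriv_eq_deriv_mul hu hv hiu hiv
    have key : ∫ t in (0:ℝ)..1, (1-t)^(b+1) * t^a
        = ((b+1) : ℝ)/(a+1) * ∫ t in (0:ℝ)..1, t^(a+1) * (1-t)^b := by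
      rw [H, ← intervalIntegral.integral_const_mul,
        show (∫ x in (0:ℝ)..1, -(((b:ℝ)+1)*(1-x)^b) * (x^(a+1)/((a:ℝ)+1)))
          = ∫ x in (0:ℝ)..1, -((((b:ℝ)+1))/((a:ℝ)+1) * (x^(a+1)*(1-x)^b))
          from intervalIntegral.integral_congr (fun x _ => by ring),
        intervalIntegral.integral_neg]
      simp
    have key2 : ∫ t in (0:ℝ)..1, t^a * (1-t)^(b+1)
        = ((b+1) : ℝ)/(a+1) * ∫ t in (0:ℝ)..1, t^(a+1) * (1-t)^b := by
      rw [← key]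
      exact intervalIntegral.integral_congr (fun x _ => by ring)
    rw [key2, ih (a+1)]
    have e1 : a+1+b+1 = a+(b+1)+1 := by omega
    rw [e1, Nat.factorial_succ a, Nat.factorial_succ b]
    have h1 : ((a+(b+1)+1).factorial : ℝ) ≠ 0 := by positivity
    push_cast
    field_simp


open scoped Classical in
lemma aux_bipartite {ι : Type*} [Fintype ι] (S R : Finset ι) (hd : Disjoint S R)
    (hS : 1 ≤ S.card) (hR : R.Nonempty) :
    Measure.pi (fun _ : ι => volume.restrict (Icc (0:ℝ) 1))
        {u | ∀ p ∈ S, ∀ q ∈ R, u p ≤ u q}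
      ≤ ENNReal.ofReal ((S.card.factorial * R.card.factorial : ℝ)
          / (S.card + R.card).factorial) := by
  set ρ : Measure ℝ := volume.restrict (Icc (0:ℝ) 1) with hρ
  haveI hρP : IsProbabilityMeasure ρ := ⟨by
    rw [hρ, Measure.restrict_apply_univ]; simp [Real.volume_Icc]⟩
  set k := S.card with hk
  set r := R.card with hr
  have hk0 : k ≠ 0 := by omega
  have hkpos : 0 < k := hS
  -- basic facts about ρ
  have hIic : ∀ s : ℝ, ρ (Iic s) ≤ ENNReal.ofReal (min s 1) := by
    intro s
    rw [hρ, Measure.restrict_apply measurableSet_Iic]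
    rcases le_total s 1 with h | h
    · rw [min_eq_left h]
      calc volume (Iic s ∩ Icc 0 1) ≤ volume (Icc 0 s) :=
            measure_mono (fun x hx => ⟨hx.2.1, hx.1⟩)
        _ = ENNReal.ofReal s := by rw [Real.volume_Icc]; simp
    · rw [min_eq_right h]
      calc volume (Iic s ∩ Icc 0 1) ≤ volume (Icc (0:ℝ) 1) :=
            measure_mono inter_subset_right
        _ = ENNReal.ofReal 1 := by rw [Real.volume_Icc]; simp
  have hIoi : ∀ t : ℝ, 0 ≤ t → ρ (Ioi t) ≤ ENNReal.ofReal (1 - t) := by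
    intro t _
    rw [hρ, Measure.restrict_apply measurableSet_Ioi]
    calc volume (Ioi t ∩ Icc 0 1) ≤ volume (Ioc t 1) :=
          measure_mono (fun x hx => ⟨hx.1, hx.2.2⟩)
      _ = ENNReal.ofReal (1 - t) := Real.volume_Ioc
  -- split the coordinates
  set P : ι → Prop := fun i => i ∈ S with hP
  set e := MeasurableEquiv.piEquivPiSubtypeProd (fun _ : ι => ℝ) P with he
  have mp := measurePreserving_piEquivPiSubtypeProd (fun _ : ι => ρ) P
  set D : Set (ι → ℝ) := {u | ∀ p ∈ S, ∀ q ∈ R, u p ≤ u q} with hD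
  have hDm : MeasurableSet D := by
    have hDeq : D = ⋂ p ∈ (S : Set ι), ⋂ q ∈ (R : Set ι), {u : ι → ℝ | u p ≤ u q} := by
      ext u; simp [hD]
    rw [hDeq]
    exact MeasurableSet.biInter S.countable_toSet fun p _ =>
      MeasurableSet.biInter R.countable_toSet fun q _ =>
        measurableSet_le (measurable_pi_apply p) (measurable_pi_apply q)
  set B : Set (({i // P i} → ℝ) × ({i // ¬ P i} → ℝ)) := e.symm ⁻¹' D with hB
  have hBm : MeasurableSet B := e.symm.measurable hDm
  have hDB := mp.measure_preimage (s := B) hBm.nullMeasurableSet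
  have hDpre : ⇑(MeasurableEquiv.piEquivPiSubtypeProd (fun _ : ι => ℝ) P) ⁻¹' B = D := by
    rw [hB, ← Set.preimage_comp, ← he]
    simp
  rw [hDpre] at hDB
  rw [hDB]
  -- the complement-side finset
  have hRnotP : ∀ q ∈ R, ¬ P q := fun q hq => Finset.disjoint_right.1 hd hq
  set R' : Finset {i // ¬ P i} := R.subtype (fun i => ¬ P i) with hR'
  have hmemR' : ∀ (q : {i // ¬ P i}), q ∈ R' ↔ q.1 ∈ R := by
    intro q
    rw [hR', Finset.mem_subtype]
  have hR'ne : R'.Nonempty := by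
    obtain ⟨q, hq⟩ := hR
    exact ⟨⟨q, hRnotP q hq⟩, (hmemR' _).2 hq⟩
  have hR'card : R'.card = r := by
    rw [hR', Finset.card_subtype, Finset.filter_true_of_mem (fun q hq => hRnotP q hq)]
  -- rewrite the section sets
  have hsection : ∀ c : {i // ¬ P i} → ℝ,
      ((fun a => (a, c)) ⁻¹' B)
        = Set.pi Set.univ (fun _ : {i // P i} => Iic (R'.inf' hR'ne c)) := by
    intro c
    ext a
    simp only [hB, Set.mem_preimage, hD, Set.mem_setOf_eq, Set.mem_pi, Set.mem_univ,
      Set.mem_Iic, forall_true_left, true_implies]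
    constructor
    · intro h p
      rw [Finset.le_inf'_iff]
      intro q hq
      have hq1 : q.1 ∈ R := (hmemR' q).1 hq
      have h2 : (if hh : P p.1 then a ⟨p.1, hh⟩ else c ⟨p.1, hh⟩)
          ≤ (if hh : P q.1 then a ⟨q.1, hh⟩ else c ⟨q.1, hh⟩) := h p.1 p.2 q.1 hq1
      rwa [dif_pos p.2, dif_neg q.2] at h2
    · intro h p hp q hq
      show (if hh : P p then a ⟨p, hh⟩ else c ⟨p, hh⟩)
          ≤ (if hh : P q then a ⟨q, hh⟩ else c ⟨q, hh⟩)
      rw [dif_pos hp, dif_neg (hRnotP q hq)]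
      exact le_trans (h ⟨p, hp⟩) (Finset.inf'_le _ ((hmemR' ⟨q, hRnotP q hq⟩).2 hq))
  -- universal-instance card lemma
  have hj : ∀ (inst : Fintype {i // P i}), (@Finset.univ _ inst).card = k := by
    intro inst
    rw [@Finset.card_univ _ inst]
    exact @Fintype.card_coe _ S inst
  -- pi measure of a uniform box on the S-side, stated for an arbitrary instance
  have hpi : ∀ (inst : Fintype {i // P i}) (s0 : ℝ),
      @Measure.pi {i // P i} (fun _ => ℝ) inst (fun _ => inferInstance) (fun _ => ρ)
        (Set.pi Set.univ fun _ => Iic s0) = (ρ (Iic s0))^k := by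
    intro inst s0
    letI := inst
    rw [Measure.pi_pi, Finset.prod_const, hj]
  -- pointwise layer-cake bound
  have hpt : ∀ s : ℝ, (ρ (Iic s))^k
      ≤ ∫⁻ t in Ioo (0:ℝ) 1, (Iio s).indicator
          (fun t => ENNReal.ofReal ((k:ℝ) * t^(k-1))) t ∂volume := by
    intro s
    rcases le_or_gt s 0 with hs | hs
    · have hz : ρ (Iic s) = 0 := by
        rw [hρ, Measure.restrict_apply measurableSet_Iic]
        refine measure_mono_null (fun x hx => ?_) (measure_singleton (0:ℝ))
        exact le_antisymm (hx.1.trans hs) hx.2.1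
      rw [hz, zero_pow hk0]
      exact zero_le
    · set s' := min s 1 with hs'
      have hs'0 : 0 < s' := lt_min hs one_pos
      have hs'1 : s' ≤ 1 := min_le_right _ _
      have h1 : ρ (Iic s) ^ k ≤ ENNReal.ofReal s' ^ k := pow_le_pow_left' (hIic s) k
      refine le_trans h1 ?_
      rw [← ENNReal.ofReal_pow hs'0.le]
      have h3 : ∫⁻ t in Ioo (0:ℝ) s', ENNReal.ofReal ((k:ℝ) * t^(k-1)) ∂volume
          ≤ ∫⁻ t in Ioo (0:ℝ) 1, (Iio s).indicator
              (fun t => ENNReal.ofReal ((k:ℝ) * t^(k-1))) t ∂volume := by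
        have heq : ∫⁻ t in Ioo (0:ℝ) s', ENNReal.ofReal ((k:ℝ) * t^(k-1)) ∂volume
            = ∫⁻ t in Ioo (0:ℝ) s', (Iio s).indicator
                (fun t => ENNReal.ofReal ((k:ℝ) * t^(k-1))) t ∂volume := by
          refine setLIntegral_congr_fun measurableSet_Ioo ?_
          intro t ht
          have : t ∈ Iio s := lt_of_lt_of_le ht.2 (min_le_left s 1)
          rw [Set.indicator_of_mem this]
        rw [heq]
        exact lintegral_mono_set (Set.Ioo_subset_Ioo le_rfl hs'1)
      refine le_trans ?_ h3
      have hint : IntegrableOn (fun t : ℝ => (k:ℝ)*t^(k-1)) (Ioo 0 s') volume := by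
        have hc : ContinuousOn (fun t : ℝ => (k:ℝ)*t^(k-1)) (Icc 0 s') :=
          (continuous_const.mul (continuous_pow _)).continuousOn
        exact (hc.integrableOn_Icc).mono_set Set.Ioo_subset_Icc_self
      have hnn : 0 ≤ᵐ[volume.restrict (Ioo (0:ℝ) s')] fun t : ℝ => (k:ℝ)*t^(k-1) := by
        filter_upwards [ae_restrict_mem measurableSet_Ioo] with t ht
        have : (0:ℝ) ≤ t := le_of_lt ht.1
        positivity
      rw [← MeasureTheory.ofReal_integral_eq_lintegral_ofReal hint hnn]
      apply ENNReal.ofReal_le_ofReal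
      rw [← MeasureTheory.integral_Ioc_eq_integral_Ioo,
        ← intervalIntegral.integral_of_le hs'0.le,
        intervalIntegral.integral_const_mul, integral_pow]
      have hkk : k - 1 + 1 = k := Nat.succ_pred_eq_of_pos hkpos
      rw [hkk, zero_pow hk0]
      have hkR : ((k:ℝ)) ≠ 0 := Nat.cast_ne_zero.2 hk0
      field_simp
      rw [← Nat.cast_add_one, hkk]
      exact le_of_eq (by ring)
  -- put it together
  rw [Measure.prod_apply_symm hBm]
  refine le_trans (lintegral_mono (g := fun c : {i // ¬ P i} → ℝ =>
      ∫⁻ t in Ioo (0:ℝ) 1, ({ct : ℝ | ∀ q ∈ R', ct < c q}).indicator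
        (fun t => ENNReal.ofReal ((k:ℝ) * t^(k-1))) t ∂volume) (fun c => ?_)) ?_
  · rw [hsection c, hpi]
    have hset : {ct : ℝ | ∀ q ∈ R', ct < c q} = Iio (R'.inf' hR'ne c) := by
      ext t
      simp [Finset.lt_inf'_iff]
    show ρ (Iic (R'.inf' hR'ne c)) ^ k ≤ ∫⁻ t in Ioo (0:ℝ) 1,
      ({ct : ℝ | ∀ q ∈ R', ct < c q}).indicator
        (fun t => ENNReal.ofReal ((k:ℝ) * t^(k-1))) t ∂volume
    rw [hset]
    exact hpt _
  -- swap the integrals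
  have hA : MeasurableSet {z : ({i // ¬ P i} → ℝ) × ℝ | ∀ q ∈ R', z.2 < z.1 q} := by
    have : {z : ({i // ¬ P i} → ℝ) × ℝ | ∀ q ∈ R', z.2 < z.1 q}
        = ⋂ q ∈ (R' : Set {i // ¬ P i}), {z : ({i // ¬ P i} → ℝ) × ℝ | z.2 < z.1 q} := by
      ext z; simp
    rw [this]
    exact MeasurableSet.biInter R'.countable_toSet fun q _ =>
      measurableSet_lt measurable_snd ((measurable_pi_apply q).comp measurable_fst)
  have hFm : Measurable (Function.uncurry (fun (c : {i // ¬ P i} → ℝ) (t : ℝ) =>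
      ({ct : ℝ | ∀ q ∈ R', ct < c q}).indicator
        (fun t => ENNReal.ofReal ((k:ℝ) * t^(k-1))) t)) := by
    have huncurry : Function.uncurry (fun (c : {i // ¬ P i} → ℝ) (t : ℝ) =>
        ({ct : ℝ | ∀ q ∈ R', ct < c q}).indicator
          (fun t => ENNReal.ofReal ((k:ℝ) * t^(k-1))) t)
        = ({z : ({i // ¬ P i} → ℝ) × ℝ | ∀ q ∈ R', z.2 < z.1 q}).indicator
            (fun z => ENNReal.ofReal ((k:ℝ) * z.2^(k-1))) := by
      ext z
      simp only [Function.uncurry, Set.indicator_apply, Set.mem_setOf_eq]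
    rw [huncurry]
    exact Measurable.indicator
      (ENNReal.measurable_ofReal.comp ((measurable_snd.pow_const (k-1)).const_mul _)) hA
  rw [lintegral_lintegral_swap hFm.aemeasurable]
  -- bound the inner integral for a.e. t
  refine le_trans (lintegral_mono_ae (g := fun t : ℝ =>
      ENNReal.ofReal ((k:ℝ) * t^(k-1) * (1-t)^r)) ?_) ?_
  · filter_upwards [ae_restrict_mem measurableSet_Ioo] with t ht
    have hptw : ∀ c : {i // ¬ P i} → ℝ,
        ({ct : ℝ | ∀ q ∈ R', ct < c q}).indicator
          (fun t => ENNReal.ofReal ((k:ℝ) * t^(k-1))) t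
        = ({c' : {i // ¬ P i} → ℝ | ∀ q ∈ R', t < c' q}).indicator
            (fun _ => ENNReal.ofReal ((k:ℝ) * t^(k-1))) c := by
      intro c
      simp only [Set.indicator_apply, Set.mem_setOf_eq]
    rw [lintegral_congr hptw]
    have hmc : MeasurableSet {c' : {i // ¬ P i} → ℝ | ∀ q ∈ R', t < c' q} := by
      have hiq : {c' : {i // ¬ P i} → ℝ | ∀ q ∈ R', t < c' q}
          = ⋂ q ∈ (R' : Set {i // ¬ P i}), {c' : {i // ¬ P i} → ℝ | t < c' q} := by
        ext z; simp
      rw [hiq]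
      exact MeasurableSet.biInter R'.countable_toSet fun q _ =>
        measurableSet_lt measurable_const (measurable_pi_apply q)
    rw [lintegral_indicator_const hmc]
    have hpiset : {c' : {i // ¬ P i} → ℝ | ∀ q ∈ R', t < c' q}
        = Set.pi Set.univ (fun q : {i // ¬ P i} => if q ∈ R' then Ioi t else Set.univ) := by
      ext c'
      simp only [Set.mem_setOf_eq, Set.mem_pi, Set.mem_univ, forall_true_left, true_implies]
      constructor
      · intro h q
        by_cases hq : q ∈ R'
        · rw [if_pos hq]; exact h q hq
        · rw [if_neg hq]; trivial
      · intro h q hq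
        have := h q
        rwa [if_pos hq] at this
    rw [hpiset, Measure.pi_pi]
    have hfac : ∀ q : {i // ¬ P i},
        ρ (if q ∈ R' then Ioi t else Set.univ) = if q ∈ R' then ρ (Ioi t) else 1 := by
      intro q
      by_cases hq : q ∈ R' <;> simp [hq]
    rw [Finset.prod_congr rfl (fun q _ => hfac q), Finset.prod_ite_mem, Finset.univ_inter,
      Finset.prod_const, hR'card]
    have hnn1 : (0:ℝ) ≤ (k:ℝ) * t^(k-1) :=
      mul_nonneg (Nat.cast_nonneg k) (pow_nonneg ht.1.le _)
    calc ENNReal.ofReal ((k:ℝ) * t^(k-1)) * ρ (Ioi t) ^ r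
        ≤ ENNReal.ofReal ((k:ℝ) * t^(k-1)) * ENNReal.ofReal (1-t) ^ r :=
          mul_le_mul_right (pow_le_pow_left' (hIoi t ht.1.le) r) _
      _ = ENNReal.ofReal ((k:ℝ) * t^(k-1) * (1-t)^r) := by
          rw [← ENNReal.ofReal_pow (by linarith [ht.2] : (0:ℝ) ≤ 1 - t),
            ← ENNReal.ofReal_mul hnn1]
  -- evaluate the final integral
  · have hint : IntegrableOn (fun t : ℝ => (k:ℝ)*t^(k-1)*(1-t)^r) (Ioo 0 1) volume := by
      have hc : ContinuousOn (fun t : ℝ => (k:ℝ)*t^(k-1)*(1-t)^r) (Icc 0 1) :=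
        ((continuous_const.mul (continuous_pow _)).mul
          ((continuous_const.sub continuous_id).pow _)).continuousOn
      exact (hc.integrableOn_Icc).mono_set Set.Ioo_subset_Icc_self
    have hnn : 0 ≤ᵐ[volume.restrict (Ioo (0:ℝ) 1)]
        fun t : ℝ => (k:ℝ)*t^(k-1)*(1-t)^r := by
      filter_upwards [ae_restrict_mem measurableSet_Ioo] with t ht
      have h0 : (0:ℝ) ≤ t := ht.1.le
      have h1 : (0:ℝ) ≤ 1 - t := by linarith [ht.2]
      positivity
    rw [← MeasureTheory.ofReal_integral_eq_lintegral_ofReal hint hnn]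
    apply ENNReal.ofReal_le_ofReal
    rw [← MeasureTheory.integral_Ioc_eq_integral_Ioo,
      ← intervalIntegral.integral_of_le zero_le_one]
    have hcongr : ∫ t in (0:ℝ)..1, (k:ℝ)*t^(k-1)*(1-t)^r
        = ∫ t in (0:ℝ)..1, (k:ℝ)*(t^(k-1)*(1-t)^r) :=
      intervalIntegral.integral_congr (fun t _ => by ring)
    rw [hcongr, intervalIntegral.integral_const_mul, aux_beta r (k-1)]
    have h5 : k-1+r+1 = k+r := by omega
    have h6 : (k:ℝ) * (k-1).factorial = k.factorial := by
      rw [← Nat.mul_factorial_pred hk0]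
      push_cast
      ring
    rw [h5]
    rw [mul_div_assoc', ← mul_assoc, h6]


end AuxMeasure

set_option maxHeartbeats 1000000 in
open scoped Classical in
/-- **inclusion probability in a fixed-size ppswor sample.**
`m` items are partitioned into `n` nonempty groups by `g` (surjectivity), group `x`
having size `w x`; each item gets an independent Uniform[0,1] value, and the seed of
a group is the minimum value over its items.  For a fixed group `x` and `1 ≤ k ≤ n`,
the probability that the seed of `x` is among the `k` smallest group seeds (i.e.,
fewer than `k` groups have a strictly smaller seed) is at least
`1 - (1 - w x / m)^k`. -/
theorem stmt_3 {Ω : Type*} [MeasurableSpace Ω] (μ : Measure Ω) [IsProbabilityMeasure μ]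
    (m n : ℕ) (g : Fin m → Fin n) (hg : Function.Surjective g)
    (w : Fin n → ℕ) (hw : ∀ x, w x = (Finset.univ.filter fun p => g p = x).card)
    (U : Fin m → Ω → ℝ) (hmeas : ∀ p, Measurable (U p))
    (hunif : ∀ p, Measure.map (U p) μ = (volume : Measure ℝ).restrict (Icc 0 1))
    (hindep : iIndepFun U μ)
    (x : Fin n) (k : ℕ) (hk1 : 1 ≤ k) (hkn : k ≤ n) :
    ENNReal.ofReal (1 - (1 - (w x : ℝ) / (m : ℝ)) ^ k) ≤
      μ {ω | (Finset.univ.filter fun y : Fin n =>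
          groupSeed g U y ω < groupSeed g U x ω).card < k} := by
  set ρ : Measure ℝ := volume.restrict (Icc (0:ℝ) 1) with hρ
  haveI hρP : IsProbabilityMeasure ρ := ⟨by
    rw [hρ, Measure.restrict_apply_univ]; simp [Real.volume_Icc]⟩
  -- basic cardinalities
  have hnm : n ≤ m := by
    have := Fintype.card_le_of_surjective g hg
    simpa using this
  have hm0 : 0 < m := by omega
  have hkm : k ≤ m := le_trans hkn hnm
  set I : Finset (Fin m) := Finset.univ.filter (fun p => g p = x) with hI
  have hne : ∀ y : Fin n, (Finset.univ.filter (fun p => g p = y)).Nonempty := by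
    intro y
    obtain ⟨p, hp⟩ := hg y
    exact ⟨p, by simp [hp]⟩
  have hIne : I.Nonempty := hne x
  have hwx : w x = I.card := hw x
  have hwm : w x ≤ m := by
    rw [hwx]
    calc I.card ≤ (Finset.univ : Finset (Fin m)).card := Finset.card_le_univ I
      _ = m := by simp
  set N : ℕ := m - w x with hN
  have hOcard : (Finset.univ \ I).card = N := by
    rw [Finset.card_sdiff_of_subset (Finset.subset_univ I), hN, ← hwx]
    simp
  -- the joint law of the values is the product of uniform laws
  set J : Ω → (Fin m → ℝ) := fun ω p => U p ω with hJ
  have hJmeas : Measurable J := measurable_pi_lambda _ (fun p => hmeas p)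
  have hmap : Measure.map J μ = Measure.pi (fun _ : Fin m => ρ) := by
    refine (Measure.pi_eq fun s hs => ?_).symm
    rw [Measure.map_apply hJmeas (MeasurableSet.univ_pi hs)]
    have hpre : J ⁻¹' (Set.pi Set.univ s) = ⋂ p ∈ (Finset.univ : Finset (Fin m)), U p ⁻¹' s p := by
      ext ω
      simp [hJ, Set.mem_pi]
    rw [hpre, hindep.measure_inter_preimage_eq_mul Finset.univ (fun p _ => hs p)]
    refine Finset.prod_congr rfl (fun p _ => ?_)
    rw [← Measure.map_apply (hmeas p) (hs p), hunif p, hρ]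
  -- the bad event is contained in the preimage of a nice set
  set E : Set (Fin m → ℝ) := ⋃ S ∈ (Finset.univ \ I).powersetCard k,
      {u : Fin m → ℝ | ∀ p ∈ S, ∀ q ∈ Finset.univ \ S, u p ≤ u q} with hE
  have hEmeas : MeasurableSet E := by
    refine MeasurableSet.biUnion ((Finset.univ \ I).powersetCard k).countable_toSet
      (fun S _ => ?_)
    have : {u : Fin m → ℝ | ∀ p ∈ S, ∀ q ∈ Finset.univ \ S, u p ≤ u q}
        = ⋂ p ∈ (S : Set (Fin m)), ⋂ q ∈ ((Finset.univ \ S : Finset (Fin m)) : Set (Fin m)),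
            {u : Fin m → ℝ | u p ≤ u q} := by
      ext u; simp
    rw [this]
    exact MeasurableSet.biInter S.countable_toSet fun p _ =>
      MeasurableSet.biInter (Finset.univ \ S).countable_toSet fun q _ =>
        measurableSet_le (measurable_pi_apply p) (measurable_pi_apply q)
  have hsub : {ω | k ≤ (Finset.univ.filter fun y : Fin n =>
      groupSeed g U y ω < groupSeed g U x ω).card} ⊆ J ⁻¹' E := by
    intro ω hω
    simp only [Set.mem_setOf_eq] at hω
    -- seeds as inf'
    have hseed : ∀ y : Fin n, groupSeed g U y ω
        = (((Finset.univ.filter (fun p => g p = y)).inf' (hne y) (fun p => U p ω) : ℝ) : WithTop ℝ) := by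
      intro y
      exact (Finset.coe_inf' (hne y) (fun p => U p ω)).symm
    -- step 1: at least k items beat every item of group x
    have hstep1 : k ≤ (Finset.univ.filter fun p : Fin m =>
        ∀ q ∈ I, U p ω < U q ω).card := by
      set s := Finset.univ.filter fun y : Fin n =>
        groupSeed g U y ω < groupSeed g U x ω with hs
      set t := Finset.univ.filter fun p : Fin m => ∀ q ∈ I, U p ω < U q ω with ht
      have hEx : ∀ y ∈ s, ∃ p, g p = y ∧ ∀ q ∈ I, U p ω < U q ω := by
        intro y hy
        simp only [hs, Finset.mem_filter, Finset.mem_univ, true_and] at hy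
        obtain ⟨p, hpmem, hpeq⟩ := Finset.exists_mem_eq_inf' (hne y) (fun p => U p ω)
        refine ⟨p, (Finset.mem_filter.1 hpmem).2, fun q hq => ?_⟩
        have hlt : (Finset.univ.filter (fun p => g p = y)).inf' (hne y) (fun p => U p ω)
            < (Finset.univ.filter (fun p => g p = x)).inf' (hne x) (fun p => U p ω) := by
          have := hy
          rw [hseed y, hseed x, WithTop.coe_lt_coe] at this
          exact this
        have hle : (Finset.univ.filter (fun p => g p = x)).inf' (hne x) (fun p => U p ω)
            ≤ U q ω := Finset.inf'_le _ (by simpa [hI] using hq)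
        calc U p ω = _ := hpeq.symm
          _ < _ := hlt
          _ ≤ U q ω := hle
      have hdef : ∃ p : Fin m, True := ⟨(hg x).choose, trivial⟩
      set f : Fin n → Fin m := fun y =>
        if h : ∃ p, g p = y ∧ ∀ q ∈ I, U p ω < U q ω then h.choose else (hg x).choose with hf
      have hmapsto : ∀ y ∈ s, f y ∈ t := by
        intro y hy
        simp only [hf]
        rw [dif_pos (hEx y hy)]
        simp only [ht, Finset.mem_filter, Finset.mem_univ, true_and]
        exact (hEx y hy).choose_spec.2
      have hinj : Set.InjOn f s := by
        intro y hy y' hy' hff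
        simp only [hf] at hff
        rw [dif_pos (hEx y hy), dif_pos (hEx y' hy')] at hff
        have h1 := (hEx y hy).choose_spec.1
        have h2 := (hEx y' hy').choose_spec.1
        rw [← h1, ← h2, hff]
      calc k ≤ s.card := hω
        _ ≤ t.card := Finset.card_le_card_of_injOn f hmapsto hinj
    -- step 2: produce the k smallest coordinates
    obtain ⟨T, hTsub, hTcard⟩ := Finset.exists_subset_card_eq hstep1
    have hTprop : ∀ p ∈ T, ∀ q ∈ I, U p ω < U q ω := by
      intro p hp
      have := hTsub hp
      simp only [Finset.mem_filter, Finset.mem_univ, true_and] at this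
      exact this
    obtain ⟨S, hScard, hSnotI, hSprop⟩ := aux_cover (fun p => U p ω) I k T hTcard hTprop
    simp only [Set.mem_preimage, hE, Set.mem_iUnion]
    refine ⟨S, ?_, ?_⟩
    · rw [Finset.mem_powersetCard]
      exact ⟨fun p hp => Finset.mem_sdiff.2 ⟨Finset.mem_univ p, hSnotI p hp⟩, hScard⟩
    · intro p hp q hq
      exact hSprop p hp q (Finset.mem_sdiff.1 hq).2
  -- the measure of E is small
  have hEbound : (Measure.map J μ) E ≤ ENNReal.ofReal ((1 - (w x : ℝ) / (m : ℝ)) ^ k) := by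
    rw [hmap]
    calc Measure.pi (fun _ : Fin m => ρ) E
        ≤ ∑ S ∈ (Finset.univ \ I).powersetCard k,
            Measure.pi (fun _ : Fin m => ρ)
              {u : Fin m → ℝ | ∀ p ∈ S, ∀ q ∈ Finset.univ \ S, u p ≤ u q} := by
          rw [hE]
          exact measure_biUnion_finset_le _ _
      _ ≤ ∑ S ∈ (Finset.univ \ I).powersetCard k,
            ENNReal.ofReal ((k.factorial * (m-k).factorial : ℝ) / m.factorial) := by
          refine Finset.sum_le_sum (fun S hSmem => ?_)
          rw [Finset.mem_powersetCard] at hSmem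
          obtain ⟨hSsub, hScard⟩ := hSmem
          have hdisj : Disjoint S (Finset.univ \ S) := Finset.disjoint_sdiff
          have hSne : 1 ≤ S.card := by omega
          have hRne : (Finset.univ \ S).Nonempty := by
            obtain ⟨q, hq⟩ := hIne
            refine ⟨q, Finset.mem_sdiff.2 ⟨Finset.mem_univ q, fun hqS => ?_⟩⟩
            have := hSsub hqS
            rw [Finset.mem_sdiff] at this
            exact this.2 hq
          have hRcard : (Finset.univ \ S).card = m - k := by
            rw [Finset.card_sdiff_of_subset (Finset.subset_univ S), hScard]
            simp
          have := aux_bipartite S (Finset.univ \ S) hdisj hSne hRne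
          rw [hScard, hRcard] at this
          have hkmk : k + (m - k) = m := by omega
          rw [hkmk] at this
          exact this
      _ = ((N.choose k : ℕ) : ENNReal)
            * ENNReal.ofReal ((k.factorial * (m-k).factorial : ℝ) / m.factorial) := by
          rw [Finset.sum_const, Finset.card_powersetCard, hOcard, nsmul_eq_mul]
      _ ≤ ENNReal.ofReal ((1 - (w x : ℝ) / (m : ℝ)) ^ k) := by
          rw [← ENNReal.ofReal_natCast, ← ENNReal.ofReal_mul (by positivity)]
          apply ENNReal.ofReal_le_ofReal
          have heq : (1 - (w x : ℝ) / (m : ℝ)) = (N : ℝ) / m := by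
            rw [hN, Nat.cast_sub hwm]
            field_simp
          rw [heq]
          exact aux_real N m k (by omega) hkm hm0
  -- put everything together
  have hbadE : μ {ω | k ≤ (Finset.univ.filter fun y : Fin n =>
      groupSeed g U y ω < groupSeed g U x ω).card}
      ≤ ENNReal.ofReal ((1 - (w x : ℝ) / (m : ℝ)) ^ k) := by
    calc μ _ ≤ μ (J ⁻¹' E) := measure_mono hsub
      _ = (Measure.map J μ) E := (Measure.map_apply hJmeas hEmeas).symm
      _ ≤ _ := hEbound
  have hcover : (1 : ENNReal) ≤ μ {ω | (Finset.univ.filter fun y : Fin n =>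
        groupSeed g U y ω < groupSeed g U x ω).card < k}
      + μ {ω | k ≤ (Finset.univ.filter fun y : Fin n =>
        groupSeed g U y ω < groupSeed g U x ω).card} := by
    have huniv : (Set.univ : Set Ω) ⊆ {ω | (Finset.univ.filter fun y : Fin n =>
        groupSeed g U y ω < groupSeed g U x ω).card < k}
      ∪ {ω | k ≤ (Finset.univ.filter fun y : Fin n =>
        groupSeed g U y ω < groupSeed g U x ω).card} := by
      intro ω _
      rcases lt_or_ge ((Finset.univ.filter fun y : Fin n =>
        groupSeed g U y ω < groupSeed g U x ω).card) k with h | h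
      · exact Or.inl h
      · exact Or.inr h
    calc (1:ENNReal) = μ Set.univ := (measure_univ).symm
      _ ≤ μ (_ ∪ _) := measure_mono huniv
      _ ≤ _ := measure_union_le _ _
  have hq0 : (0:ℝ) ≤ (1 - (w x : ℝ) / (m : ℝ)) ^ k := by
    have heq : (1 - (w x : ℝ) / (m : ℝ)) = (N : ℝ) / m := by
      rw [hN, Nat.cast_sub hwm]
      field_simp
    rw [heq]
    positivity
  calc ENNReal.ofReal (1 - (1 - (w x : ℝ) / (m : ℝ)) ^ k)
      = 1 - ENNReal.ofReal ((1 - (w x : ℝ) / (m : ℝ)) ^ k) := by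
        rw [ENNReal.ofReal_sub _ hq0, ENNReal.ofReal_one]
    _ ≤ 1 - μ {ω | k ≤ (Finset.univ.filter fun y : Fin n =>
          groupSeed g U y ω < groupSeed g U x ω).card} := tsub_le_tsub_left hbadE 1
    _ ≤ μ {ω | (Finset.univ.filter fun y : Fin n =>
          groupSeed g U y ω < groupSeed g U x ω).card < k} := by
        rw [tsub_le_iff_right]
        exact hcover
end

section
/- Let m items be partitioned into n nonempty groups, where group x has size w_x and m is the total number of items, and assign to each item an independent Uniform[0,1] random value; define the seed of each group as the minimum of its items' values. Let 0 < ε ≤ 1 and c > 0, and let k be an integer with k ≥ c/ε and k ≤ n. If group x satisfies w_x ≥ ε·m (i.e., x is a distinct heavy hitter with parameter ε), then the probability that the seed of group x is among the k smallest group seeds is at least 1 - exp(-c). -/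
open MeasureTheory ProbabilityTheory Set Finset

open scoped ENNReal

namespace DHH


noncomputable def mu0 : Measure ℝ := (volume : Measure ℝ).restrict (Set.Icc 0 1)

instance : IsProbabilityMeasure mu0 :=
  ⟨by simp [mu0, Real.volume_Icc]⟩

noncomputable def nu (m : ℕ) : Measure (Fin m → ℝ) := Measure.pi fun _ => mu0

instance (m : ℕ) : IsProbabilityMeasure (nu m) := by
  unfold nu; infer_instance

/-- ordered cell of an embedding -/
def ordCell {m k : ℕ} (t : Fin k ↪ Fin m) : Set (Fin m → ℝ) :=
  {u | (∀ i j : Fin k, i < j → u (t i) < u (t j)) ∧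
       ∀ (i : Fin k) (p : Fin m), p ∉ Set.range t → u (t i) < u p}

lemma measurableSet_ordCell {m k : ℕ} (t : Fin k ↪ Fin m) : MeasurableSet (ordCell t) := by
  have h1 : MeasurableSet {u : Fin m → ℝ | ∀ i j : Fin k, i < j → u (t i) < u (t j)} := by
    rw [Set.setOf_forall]
    refine MeasurableSet.iInter fun i => ?_
    rw [Set.setOf_forall]
    refine MeasurableSet.iInter fun j => ?_
    by_cases h : i < j
    · simp only [h, true_implies]
      exact measurableSet_lt (measurable_pi_apply _) (measurable_pi_apply _)
    · simp only [h, false_implies, Set.setOf_true]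
      exact MeasurableSet.univ
  have h2 : MeasurableSet {u : Fin m → ℝ |
      ∀ (i : Fin k) (p : Fin m), p ∉ Set.range t → u (t i) < u p} := by
    rw [Set.setOf_forall]
    refine MeasurableSet.iInter fun i => ?_
    rw [Set.setOf_forall]
    refine MeasurableSet.iInter fun p => ?_
    by_cases h : p ∉ Set.range t
    · simp only [h, not_false_iff, true_implies]
      exact measurableSet_lt (measurable_pi_apply _) (measurable_pi_apply _)
    · simp only [h, false_implies, Set.setOf_true]
      exact MeasurableSet.univ
  exact h1.inter h2

lemma nu_comp_perm {m : ℕ} (π : Equiv.Perm (Fin m)) {A : Set (Fin m → ℝ)}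
    (hA : MeasurableSet A) : nu m {u | u ∘ π ∈ A} = nu m A := by
  have h := measurePreserving_piCongrLeft (fun _ : Fin m => mu0) π.symm
  have happ : ∀ u : Fin m → ℝ,
      (MeasurableEquiv.piCongrLeft (fun _ : Fin m => ℝ) π.symm) u = u ∘ π := by
    intro u; funext j
    have := MeasurableEquiv.piCongrLeft_apply_apply (β := fun _ : Fin m => ℝ) π.symm u (π j)
    simpa using this
  have := h.measure_preimage_equiv A
  have hset : (MeasurableEquiv.piCongrLeft (fun _ : Fin m => ℝ) π.symm) ⁻¹' A
      = {u | u ∘ π ∈ A} := by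
    ext u; simp [Set.mem_preimage, happ u]
  rw [hset] at this
  simpa [nu] using this



open scoped Classical

lemma exists_perm_comp {m k : ℕ} (t t' : Fin k ↪ Fin m) :
    ∃ π : Equiv.Perm (Fin m), ∀ i, π (t i) = t' i := by
  classical
  have hc1 : Fintype.card {p : Fin m // p ∈ Set.range t} = k := by
    rw [Fintype.card_congr (Equiv.ofInjective t t.injective).symm, Fintype.card_fin]
  have hc1' : Fintype.card {p : Fin m // p ∈ Set.range t'} = k := by
    rw [Fintype.card_congr (Equiv.ofInjective t' t'.injective).symm, Fintype.card_fin]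
  have hc2 : Fintype.card {p : Fin m // p ∉ Set.range t}
      = Fintype.card {p : Fin m // p ∉ Set.range t'} := by
    have := Fintype.card_subtype_compl (p := fun p : Fin m => p ∈ Set.range t)
    have h' := Fintype.card_subtype_compl (p := fun p : Fin m => p ∈ Set.range t')
    simp only [hc1] at this
    simp only [hc1'] at h'
    rw [this, h']
  let e1 : {p : Fin m // p ∈ Set.range t} ≃ {p : Fin m // p ∈ Set.range t'} :=
    (Equiv.ofInjective t t.injective).symm.trans (Equiv.ofInjective t' t'.injective)
  let e2 : {p : Fin m // ¬ p ∈ Set.range t} ≃ {p : Fin m // ¬ p ∈ Set.range t'} :=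
    Fintype.equivOfCardEq hc2
  refine ⟨Equiv.subtypeCongr e1 e2, fun i => ?_⟩
  have hmem : t i ∈ Set.range t := ⟨i, rfl⟩
  have : Equiv.subtypeCongr e1 e2 (t i) = (e1 ⟨t i, hmem⟩ : Fin m) := by
    simp [Equiv.subtypeCongr, Equiv.sumCompl, hmem]
  rw [this]
  have : e1 ⟨t i, hmem⟩ = Equiv.ofInjective t' t'.injective i := by
    simp only [e1, Equiv.trans_apply]
    congr 1
    exact (Equiv.ofInjective t t.injective).injective (by simp [Equiv.apply_ofInjective_symm])
  rw [this]
  rfl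

lemma map_joint {Ω : Type*} [MeasurableSpace Ω] (μ : Measure Ω) [IsProbabilityMeasure μ]
    {m : ℕ} (U : Fin m → Ω → ℝ) (hmeas : ∀ p, Measurable (U p))
    (hunif : ∀ p, Measure.map (U p) μ = mu0)
    (hindep : iIndepFun U μ) :
    Measure.map (fun ω p => U p ω) μ = nu m := by
  refine (Measure.pi_eq fun s hs => ?_).symm
  rw [Measure.map_apply (measurable_pi_lambda _ fun p => hmeas p) (MeasurableSet.univ_pi hs)]
  have hset : (fun ω p => U p ω) ⁻¹' (Set.pi Set.univ s) = ⋂ p ∈ Finset.univ, U p ⁻¹' s p := by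
    ext ω; simp [Set.mem_pi]
  rw [hset, hindep.measure_inter_preimage_eq_mul Finset.univ (fun i _ => hs i)]
  exact Finset.prod_congr rfl fun p _ => by
    rw [← hunif p, Measure.map_apply (hmeas p) (hs p)]

lemma measure_eq_null {Ω : Type*} [MeasurableSpace Ω] (μ : Measure Ω) [IsProbabilityMeasure μ]
    {X Y : Ω → ℝ} (hX : Measurable X) (hY : Measurable Y) (h : IndepFun X Y μ)
    (hY' : Measure.map Y μ = mu0) : μ {ω | X ω = Y ω} = 0 := by
  have hmap := (indepFun_iff_map_prod_eq_prod_map_map hX.aemeasurable hY.aemeasurable).mp h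
  have hd : MeasurableSet {x : ℝ × ℝ | x.1 = x.2} :=
    measurableSet_eq_fun measurable_fst measurable_snd
  have hset : {ω | X ω = Y ω} = (fun ω => (X ω, Y ω)) ⁻¹' {x : ℝ × ℝ | x.1 = x.2} := rfl
  rw [hset, ← Measure.map_apply (hX.prodMk hY) hd, hmap, hY', Measure.prod_apply hd]
  have hslice : ∀ a : ℝ, (Prod.mk a ⁻¹' {x : ℝ × ℝ | x.1 = x.2}) = {a} := by
    intro a; ext b; simp [eq_comm]
  simp only [hslice]
  have : ∀ a : ℝ, mu0 {a} = 0 := fun a => by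
    refine le_antisymm ?_ zero_le
    calc mu0 {a} ≤ (volume : Measure ℝ) {a} := Measure.restrict_le_self _
    _ = 0 := measure_singleton a
  simp [this]

def InjSet (m : ℕ) : Set (Fin m → ℝ) := {u | Function.Injective u}

lemma measurableSet_injSet {m : ℕ} : MeasurableSet (InjSet m) := by
  have : InjSet m = ⋂ (p : Fin m), ⋂ (q : Fin m), {u : Fin m → ℝ | u p = u q → p = q} := by
    ext u; simp [InjSet, Function.Injective, Set.mem_iInter]
  rw [this]
  refine MeasurableSet.iInter fun p => MeasurableSet.iInter fun q => ?_
  by_cases h : p = q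
  · simp only [h, implies_true, Set.setOf_true]; exact MeasurableSet.univ
  · have : {u : Fin m → ℝ | u p = u q → p = q} = {u : Fin m → ℝ | u p = u q}ᶜ := by
      ext u; simp [h]
    rw [this]
    exact (measurableSet_eq_fun (measurable_pi_apply p) (measurable_pi_apply q)).compl

lemma measurable_finset_inf' {δ : Type*} [MeasurableSpace δ] {ι : Type*} {s : Finset ι}
    (hs : s.Nonempty) (f : ι → δ → ℝ) (hf : ∀ i, Measurable (f i)) :
    Measurable fun d => s.inf' hs fun i => f i d := by
  have heq : (fun d => s.inf' hs fun i => f i d) = s.inf' hs f := by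
    funext d; exact (Finset.inf'_apply hs f d).symm
  rw [heq]
  exact Finset.inf'_induction hs f (fun a ha b hb => ha.inf hb) fun i _ => hf i





lemma ordCell_not_lt {m k : ℕ} {t t' : Fin k ↪ Fin m} {u : Fin m → ℝ}
    (h : u ∈ ordCell t) (h' : u ∈ ordCell t') {i : Fin k}
    (ih : ∀ j, j < i → t j = t' j) : ¬ u (t i) < u (t' i) := by
  intro hlt
  by_cases hmem : t i ∈ Set.range t'
  · obtain ⟨j, hj⟩ := hmem
    rcases lt_trichotomy j i with hji | rfl | hij
    · have h1 : t j = t' j := ih j hji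
      have : t j = t i := by rw [h1, hj]
      exact absurd (t.injective this) (ne_of_lt hji)
    · rw [hj] at hlt; exact lt_irrefl _ hlt
    · have h2 : u (t' i) < u (t' j) := h'.1 i j hij
      rw [hj] at h2
      exact lt_asymm hlt h2
  · exact lt_asymm hlt (h'.2 i (t i) hmem)

lemma ordCell_disjoint {m k : ℕ} {t t' : Fin k ↪ Fin m} {u : Fin m → ℝ}
    (hu : Function.Injective u) (h : u ∈ ordCell t) (h' : u ∈ ordCell t') : t = t' := by
  have key : ∀ N : ℕ, ∀ i : Fin k, (i : ℕ) < N → t i = t' i := by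
    intro N
    induction N with
    | zero => intro i hi; omega
    | succ N ihN =>
      intro i hi
      have ih : ∀ j, j < i → t j = t' j := fun j hj =>
        ihN j (lt_of_lt_of_le hj (by omega))
      have ih' : ∀ j, j < i → t' j = t j := fun j hj => (ih j hj).symm
      have h1 := ordCell_not_lt h h' ih
      have h2 := ordCell_not_lt h' h ih'
      exact hu (le_antisymm (not_lt.mp h2) (not_lt.mp h1))
  exact Function.Embedding.ext fun i => key (i + 1) i (by omega)

lemma descFactorial_mul_pow_le {b m k : ℕ} (h : b ≤ m) :
    b.descFactorial k * m ^ k ≤ m.descFactorial k * b ^ k := by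
  induction k with
  | zero => simp
  | succ k ih =>
    rw [Nat.descFactorial_succ, Nat.descFactorial_succ, pow_succ, pow_succ]
    have h1 : (b - k) * m ≤ (m - k) * b := by
      rw [Nat.sub_mul, Nat.sub_mul, mul_comm b m]
      exact Nat.sub_le_sub_left (Nat.mul_le_mul_left k h) (m * b)
    calc (b - k) * b.descFactorial k * (m ^ k * m)
        = ((b - k) * m) * (b.descFactorial k * m ^ k) := by ring
      _ ≤ ((m - k) * b) * (m.descFactorial k * b ^ k) := Nat.mul_le_mul h1 ih
      _ = (m - k) * m.descFactorial k * (b ^ k * b) := by ring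

open scoped Classical in
lemma cover {m n k : ℕ} (g : Fin m → Fin n)
    (hgne : ∀ y, (Finset.univ.filter fun p => g p = y).Nonempty)
    (x : Fin n) (u : Fin m → ℝ) (hu : Function.Injective u) (hkm : k ≤ m)
    (hcard : k ≤ (Finset.univ.filter fun y : Fin n =>
        (Finset.univ.filter fun p => g p = y).inf' (hgne y) u <
        (Finset.univ.filter fun p => g p = x).inf' (hgne x) u).card) :
    ∃ t : Fin k ↪ Fin m, (∀ i, g (t i) ≠ x) ∧ u ∈ ordCell t := by
  classical
  set σ := Tuple.sort u with hσ
  have hmono : Monotone (u ∘ σ) := Tuple.monotone_sort u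
  have hinj : Function.Injective (u ∘ σ) := hu.comp σ.injective
  have hsm : StrictMono (u ∘ σ) := hmono.strictMono_of_injective hinj
  set ux := (Finset.univ.filter fun p => g p = x).inf' (hgne x) u with hux
  set P : Finset (Fin m) := Finset.univ.filter fun p => u p < ux with hP
  have hPk : k ≤ P.card := by
    have hpick : ∀ y : Fin n, ∃ p, p ∈ Finset.univ.filter (fun p => g p = y) ∧
        (Finset.univ.filter fun p => g p = y).inf' (hgne y) u = u p :=
      fun y => Finset.exists_mem_eq_inf' (hgne y) u
    choose f hf1 hf2 using hpick
    have hle : (Finset.univ.filter fun y : Fin n =>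
        (Finset.univ.filter fun p => g p = y).inf' (hgne y) u < ux).card ≤ P.card := by
      refine Finset.card_le_card_of_injOn f ?_ ?_
      · intro y hy
        simp only [Finset.mem_coe, Finset.mem_filter, Finset.mem_univ, true_and] at hy
        simp only [hP, Finset.mem_coe, Finset.mem_filter, Finset.mem_univ, true_and]
        rw [← hf2 y]; exact hy
      · intro y1 _ y2 _ hfe
        have e1 : g (f y1) = y1 := by
          have := hf1 y1; simp only [Finset.mem_filter, Finset.mem_univ, true_and] at this
          exact this
        have e2 : g (f y2) = y2 := by
          have := hf1 y2; simp only [Finset.mem_filter, Finset.mem_univ, true_and] at this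
          exact this
        rw [← e1, ← e2, hfe]
    exact le_trans hcard hle
  have hdown : ∀ i : Fin m, (i : ℕ) < P.card → σ i ∈ P := by
    intro i hi
    set Q : Finset (Fin m) := Finset.univ.filter fun j => σ j ∈ P with hQ
    have hQcard : Q.card = P.card := by
      have hQeq : Q = P.map σ.symm.toEmbedding := by
        ext j
        simp only [hQ, Finset.mem_filter, Finset.mem_univ, true_and, Finset.mem_map,
          Equiv.coe_toEmbedding]
        constructor
        · intro h; exact ⟨σ j, h, by simp⟩
        · rintro ⟨p, hp, rfl⟩; simpa using hp
      rw [hQeq, Finset.card_map]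
    by_contra hiQ
    have hiQ' : i ∉ Q := by simpa [hQ] using hiQ
    have hsub : Q ⊆ Finset.Iio i := by
      intro j hj
      simp only [Finset.mem_Iio]
      by_contra hji
      push_neg at hji
      apply hiQ'
      simp only [hQ, Finset.mem_filter, Finset.mem_univ, true_and] at hj ⊢
      simp only [hP, Finset.mem_filter, Finset.mem_univ, true_and] at hj ⊢
      exact lt_of_le_of_lt (hmono hji) hj
    have hcc := Finset.card_le_card hsub
    rw [hQcard, Fin.card_Iio] at hcc
    omega
  have hmemP : ∀ i : Fin k, σ (Fin.castLE hkm i) ∈ P := by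
    intro i
    refine hdown _ ?_
    simp only [Fin.coe_castLE]
    exact lt_of_lt_of_le i.2 hPk
  have huxle : ∀ i : Fin k, u (σ (Fin.castLE hkm i)) < ux := by
    intro i
    have := hmemP i
    simpa [hP] using this
  refine ⟨⟨fun i => σ (Fin.castLE hkm i), ?_⟩, ?_, ?_, ?_⟩
  · intro a b hab
    exact Fin.castLE_injective hkm (σ.injective hab)
  · intro i hgx
    have hmem : σ (Fin.castLE hkm i) ∈ Finset.univ.filter fun p => g p = x := by
      simp only [Finset.mem_filter, Finset.mem_univ, true_and]
      exact hgx
    have h2 : ux ≤ u (σ (Fin.castLE hkm i)) := Finset.inf'_le u hmem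
    exact absurd (huxle i) (not_lt.mpr h2)
  · intro i j hij
    refine hsm ?_
    rw [Fin.lt_def] at hij ⊢
    simpa using hij
  · intro i p hp
    have hpi : k ≤ (σ.symm p : ℕ) := by
      by_contra h
      push_neg at h
      refine hp ⟨⟨(σ.symm p : ℕ), h⟩, ?_⟩
      show σ (Fin.castLE hkm ⟨(σ.symm p : ℕ), h⟩) = p
      have : Fin.castLE hkm ⟨(σ.symm p : ℕ), h⟩ = σ.symm p := by
        apply Fin.ext; rfl
      rw [this, Equiv.apply_symm_apply]
    have hlt : (Fin.castLE hkm i) < σ.symm p := by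
      rw [Fin.lt_def]
      simp only [Fin.coe_castLE]
      exact lt_of_lt_of_le i.2 hpi
    have := hsm hlt
    exact (by simpa using this : u (σ (Fin.castLE hkm i)) < u p)


end DHH

set_option maxHeartbeats 2000000 in
open scoped Classical in
/-- **a sample of size `c/ε` catches every `ε`-distinct heavy hitter
with probability at least `1 - exp (-c)`.**
`m` items are partitioned into `n` nonempty groups by `g` (surjectivity), group `x`
having size `w x`; each item gets an independent Uniform[0,1] value and the seed of
a group is the minimum value over its items.  If `0 < ε ≤ 1`, `c > 0`,
`c/ε ≤ k ≤ n`, and group `x` satisfies `w x ≥ ε·m`, then the probability that the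
seed of `x` is among the `k` smallest group seeds is at least `1 - exp (-c)`. -/
theorem stmt_4 {Ω : Type*} [MeasurableSpace Ω] (μ : Measure Ω) [IsProbabilityMeasure μ]
    (m n : ℕ) (g : Fin m → Fin n) (hg : Function.Surjective g)
    (w : Fin n → ℕ) (hw : ∀ x, w x = (Finset.univ.filter fun p => g p = x).card)
    (U : Fin m → Ω → ℝ) (hmeas : ∀ p, Measurable (U p))
    (hunif : ∀ p, Measure.map (U p) μ = (volume : Measure ℝ).restrict (Icc 0 1))
    (hindep : iIndepFun U μ)
    (ε c : ℝ) (hε0 : 0 < ε) (hε1 : ε ≤ 1) (hc : 0 < c)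
    (k : ℕ) (hk : c / ε ≤ (k : ℝ)) (hkn : k ≤ n)
    (x : Fin n) (hx : ε * (m : ℝ) ≤ (w x : ℝ)) :
    ENNReal.ofReal (1 - Real.exp (-c)) ≤
      μ {ω | (Finset.univ.filter fun y : Fin n =>
          groupSeed g U y ω < groupSeed g U x ω).card < k} := by
  classical
  have hgne : ∀ y, (Finset.univ.filter fun p => g p = y).Nonempty := fun y => by
    obtain ⟨p, hp⟩ := hg y
    exact ⟨p, by simp [hp]⟩
  have hk0R : (0:ℝ) < (k:ℝ) := lt_of_lt_of_le (div_pos hc hε0) hk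
  have hk1 : 0 < k := by exact_mod_cast hk0R
  have hnm : n ≤ m := by simpa using Fintype.card_le_of_surjective g hg
  have hkm : k ≤ m := hkn.trans hnm
  have hm0 : 0 < m := lt_of_lt_of_le hk1 hkm
  have hwxm : w x ≤ m := by
    rw [hw x]
    simpa using Finset.card_filter_le Finset.univ (fun p => g p = x)
  set sF : (Fin m → ℝ) → Fin n → ℝ :=
    fun u y => (Finset.univ.filter fun p => g p = y).inf' (hgne y) u with hsFdef
  set V : Set (Fin m → ℝ) :=
    {u | (Finset.univ.filter fun y : Fin n => sF u y < sF u x).card < k} with hVdef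
  set J : Ω → Fin m → ℝ := fun ω p => U p ω with hJdef
  have hseed : ∀ (ω : Ω) (y : Fin n),
      groupSeed g U y ω = ((sF (J ω) y : ℝ) : WithTop ℝ) := by
    intro ω y
    unfold groupSeed
    exact (Finset.coe_inf' (hgne y) (J ω)).symm
  have hevent : {ω | (Finset.univ.filter fun y : Fin n =>
      groupSeed g U y ω < groupSeed g U x ω).card < k} = J ⁻¹' V := by
    ext ω
    simp only [Set.mem_setOf_eq, Set.mem_preimage, hVdef]
    have hfilt : (Finset.univ.filter fun y : Fin n =>
        groupSeed g U y ω < groupSeed g U x ω)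
        = (Finset.univ.filter fun y : Fin n => sF (J ω) y < sF (J ω) x) := by
      apply Finset.filter_congr
      intro y _
      rw [hseed ω y, hseed ω x]
      exact WithTop.coe_lt_coe
    rw [hfilt]
  have hsFmeas : ∀ y, Measurable fun u : Fin m → ℝ => sF u y := fun y =>
    DHH.measurable_finset_inf' (hgne y) (fun p (u : Fin m → ℝ) => u p) (fun p => measurable_pi_apply p)
  have hVmeas : MeasurableSet V := by
    have hcm : Measurable fun u : Fin m → ℝ =>
        (Finset.univ.filter fun y : Fin n => sF u y < sF u x).card := by
      have hrw : (fun u : Fin m → ℝ =>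
          (Finset.univ.filter fun y : Fin n => sF u y < sF u x).card)
          = fun u => ∑ y : Fin n, if sF u y < sF u x then 1 else 0 := by
        funext u; rw [Finset.card_filter]
      rw [hrw]
      exact Finset.measurable_sum _ fun y _ =>
        Measurable.ite (measurableSet_lt (hsFmeas y) (hsFmeas x)) measurable_const
          measurable_const
    have hVrw : V = (fun u : Fin m → ℝ =>
        (Finset.univ.filter fun y : Fin n => sF u y < sF u x).card) ⁻¹' (Set.Iio k) := rfl
    rw [hVrw]
    exact hcm (by trivial)
  have hJmeas : Measurable J := measurable_pi_lambda _ fun p => hmeas p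
  have hjoint : Measure.map J μ = DHH.nu m :=
    DHH.map_joint μ U hmeas (fun p => by rw [hunif p]; rfl) hindep
  have hInjc : DHH.nu m ((DHH.InjSet m)ᶜ) = 0 := by
    rw [← hjoint, Measure.map_apply hJmeas DHH.measurableSet_injSet.compl]
    have hsub : J ⁻¹' (DHH.InjSet m)ᶜ ⊆
        ⋃ (p : Fin m) (q : Fin m) (_ : p ≠ q), {ω | U p ω = U q ω} := by
      intro ω hω
      simp only [Set.mem_preimage, Set.mem_compl_iff, DHH.InjSet, Set.mem_setOf_eq,
        Function.Injective] at hω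
      push_neg at hω
      obtain ⟨p, q, hpq, hne⟩ := hω
      exact Set.mem_iUnion.2 ⟨p, Set.mem_iUnion.2 ⟨q, Set.mem_iUnion.2 ⟨hne, hpq⟩⟩⟩
    refine measure_mono_null hsub ?_
    refine measure_iUnion_null fun p => measure_iUnion_null fun q =>
      measure_iUnion_null fun hpq => ?_
    exact DHH.measure_eq_null μ (hmeas p) (hmeas q) (hindep.indepFun hpq)
      (by rw [hunif q]; rfl)
  have hinter : ∀ A : Set (Fin m → ℝ), DHH.nu m (A ∩ DHH.InjSet m) = DHH.nu m A := by
    intro A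
    refine le_antisymm (measure_mono Set.inter_subset_left) ?_
    calc DHH.nu m A ≤ DHH.nu m ((A ∩ DHH.InjSet m) ∪ (DHH.InjSet m)ᶜ) :=
        measure_mono fun u hu => by
          by_cases h : u ∈ DHH.InjSet m
          · exact Or.inl ⟨hu, h⟩
          · exact Or.inr h
    _ ≤ DHH.nu m (A ∩ DHH.InjSet m) + DHH.nu m ((DHH.InjSet m)ᶜ) := measure_union_le _ _
    _ = DHH.nu m (A ∩ DHH.InjSet m) := by rw [hInjc, add_zero]
  set t₀ : Fin k ↪ Fin m := Fin.castLEEmb hkm with ht₀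
  have hcell_eq : ∀ t : Fin k ↪ Fin m,
      DHH.nu m (DHH.ordCell t) = DHH.nu m (DHH.ordCell t₀) := by
    intro t
    obtain ⟨π, hπ⟩ := DHH.exists_perm_comp t₀ t
    have hset : {u : Fin m → ℝ | u ∘ π ∈ DHH.ordCell t₀} = DHH.ordCell t := by
      ext u
      simp only [Set.mem_setOf_eq, DHH.ordCell]
      constructor
      · rintro ⟨h1, h2⟩
        constructor
        · intro i j hij
          have := h1 i j hij
          simpa [Function.comp, hπ] using this
        · intro i p hp
          have hp0 : π.symm p ∉ Set.range t₀ := by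
            rintro ⟨j, hj⟩
            exact hp ⟨j, by rw [← hπ j, hj, Equiv.apply_symm_apply]⟩
          have := h2 i (π.symm p) hp0
          simpa [Function.comp, hπ, Equiv.apply_symm_apply] using this
      · rintro ⟨h1, h2⟩
        constructor
        · intro i j hij
          have := h1 i j hij
          simp only [Function.comp_apply]
          rw [hπ, hπ]
          exact this
        · intro i p hp
          have hp' : π p ∉ Set.range t := by
            rintro ⟨j, hj⟩
            exact hp ⟨j, π.injective (by rw [hπ, hj])⟩
          have := h2 i (π p) hp'
          simp only [Function.comp_apply]
          rw [hπ]
          exact this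
    rw [← hset]
    exact DHH.nu_comp_perm π (DHH.measurableSet_ordCell t₀)
  have hcard_all : (Fintype.card (Fin k ↪ Fin m)) = m.descFactorial k := by
    rw [Fintype.card_embedding_eq, Fintype.card_fin, Fintype.card_fin]
  have hsum : (m.descFactorial k : ℝ≥0∞) * DHH.nu m (DHH.ordCell t₀) ≤ 1 := by
    have hdisj : ((Finset.univ : Finset (Fin k ↪ Fin m)) :
        Set (Fin k ↪ Fin m)).PairwiseDisjoint
        (fun t => DHH.ordCell t ∩ DHH.InjSet m) := by
      intro t _ t' _ htt'
      refine Set.disjoint_left.mpr fun u hu hu' => htt' ?_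
      exact DHH.ordCell_disjoint hu.2 hu.1 hu'.1
    have hmeasb : ∀ t ∈ (Finset.univ : Finset (Fin k ↪ Fin m)),
        MeasurableSet (DHH.ordCell t ∩ DHH.InjSet m) := fun t _ =>
      (DHH.measurableSet_ordCell t).inter DHH.measurableSet_injSet
    have hbu := measure_biUnion_finset (μ := DHH.nu m) hdisj hmeasb
    have hle : ∑ t : Fin k ↪ Fin m, DHH.nu m (DHH.ordCell t ∩ DHH.InjSet m) ≤ 1 := by
      rw [← hbu]
      exact prob_le_one
    have hconst : ∀ t : Fin k ↪ Fin m,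
        DHH.nu m (DHH.ordCell t ∩ DHH.InjSet m) = DHH.nu m (DHH.ordCell t₀) := fun t => by
      rw [hinter, hcell_eq t]
    rw [Finset.sum_congr rfl (fun t _ => hconst t), Finset.sum_const, Finset.card_univ,
      hcard_all, nsmul_eq_mul] at hle
    exact hle
  set B : Finset (Fin k ↪ Fin m) := Finset.univ.filter (fun t => ∀ i, g (t i) ≠ x) with hB
  have hcover : Vᶜ ∩ DHH.InjSet m ⊆ ⋃ t ∈ B, DHH.ordCell t := by
    rintro u ⟨huV, huinj⟩
    have hcard' : k ≤ (Finset.univ.filter fun y : Fin n => sF u y < sF u x).card := by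
      simpa [hVdef, not_lt] using huV
    obtain ⟨t, htx, htcell⟩ := DHH.cover g hgne x u huinj hkm hcard'
    exact Set.mem_biUnion (by rw [hB]; exact Finset.mem_filter.mpr ⟨Finset.mem_univ _, htx⟩) htcell
  have hVc_le : DHH.nu m Vᶜ ≤ (B.card : ℝ≥0∞) * DHH.nu m (DHH.ordCell t₀) := by
    calc DHH.nu m Vᶜ = DHH.nu m (Vᶜ ∩ DHH.InjSet m) := (hinter _).symm
    _ ≤ DHH.nu m (⋃ t ∈ B, DHH.ordCell t) := measure_mono hcover
    _ ≤ ∑ t ∈ B, DHH.nu m (DHH.ordCell t) := measure_biUnion_finset_le _ _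
    _ = B.card * DHH.nu m (DHH.ordCell t₀) := by
        rw [Finset.sum_congr rfl fun t _ => hcell_eq t, Finset.sum_const, nsmul_eq_mul]
  have hBcard : B.card ≤ (m - w x).descFactorial k := by
    rcases B.eq_empty_or_nonempty with hBe | ⟨t₁, ht₁⟩
    · simp [hBe]
    · have ht₁' : ∀ i, g (t₁ i) ≠ x := by simpa [hB] using ht₁
      haveI hinh : Nonempty (Fin k ↪ {p : Fin m // g p ≠ x}) :=
        ⟨⟨fun i => ⟨t₁ i, ht₁' i⟩, fun a b hab =>
          t₁.injective (congrArg Subtype.val hab)⟩⟩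
      have hcard_sub : Fintype.card {p : Fin m // g p ≠ x} = m - w x := by
        rw [Fintype.card_subtype]
        have hpn := Finset.card_filter_add_card_filter_not
          (s := (Finset.univ : Finset (Fin m))) (p := fun p => g p = x)
        have huc : (Finset.univ : Finset (Fin m)).card = m := by simp
        rw [hw x]
        simp only [ne_eq] at *
        omega
      have hinj2 : B.card ≤ Fintype.card (Fin k ↪ {p : Fin m // g p ≠ x}) := by
        have hcu : Fintype.card (Fin k ↪ {p : Fin m // g p ≠ x})
            = (Finset.univ : Finset (Fin k ↪ {p : Fin m // g p ≠ x})).card := by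
          simp
        rw [hcu]
        refine Finset.card_le_card_of_injOn
          (fun t => if h : ∀ i, g (t i) ≠ x then
              ⟨fun i => ⟨t i, h i⟩, fun a b hab => t.injective (congrArg Subtype.val hab)⟩
            else Classical.arbitrary _) (fun t _ => Finset.mem_univ _) ?_
        intro t ht t' ht' he
        have ht1 : ∀ i, g (t i) ≠ x := by simpa [hB] using ht
        have ht2 : ∀ i, g (t' i) ≠ x := by simpa [hB] using ht'
        simp only [dif_pos ht1, dif_pos ht2] at he
        apply Function.Embedding.ext
        intro i
        have := DFunLike.congr_fun he i
        exact congrArg Subtype.val this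
      rw [Fintype.card_embedding_eq, hcard_sub, Fintype.card_fin] at hinj2
      exact hinj2
  have hreal : ((m - w x).descFactorial k : ℝ) ≤ Real.exp (-c) * (m.descFactorial k : ℝ) := by
    have hb : ((m - w x : ℕ) : ℝ) ≤ (1 - ε) * m := by
      rw [Nat.cast_sub hwxm]
      nlinarith [hx]
    have h1 : ((m - w x).descFactorial k : ℝ) * ((m:ℝ))^k
        ≤ (m.descFactorial k : ℝ) * (((m - w x : ℕ)) : ℝ)^k := by
      exact_mod_cast DHH.descFactorial_mul_pow_le (Nat.sub_le m (w x)) (k := k)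
    have h2 : (((m - w x : ℕ)) : ℝ)^k ≤ ((1-ε) * m)^k :=
      pow_le_pow_left₀ (by positivity) hb k
    have h4 : (1-ε)^k ≤ Real.exp (-c) := by
      have h5 : (1-ε) ≤ Real.exp (-ε) := by
        have := Real.add_one_le_exp (-ε)
        linarith
      have h6 : (1-ε)^k ≤ Real.exp (-ε)^k := pow_le_pow_left₀ (by linarith) h5 k
      rw [← Real.exp_nat_mul] at h6
      refine le_trans h6 (Real.exp_le_exp.mpr ?_)
      have hcε : c ≤ ε * k := by
        rw [div_le_iff₀ hε0] at hk
        linarith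
      nlinarith
    have hkpos : (0:ℝ) < (m:ℝ)^k := by
      have : (0:ℝ) < (m:ℝ) := by exact_mod_cast hm0
      positivity
    have hcomb : ((m - w x).descFactorial k : ℝ) * (m:ℝ)^k
        ≤ (Real.exp (-c) * (m.descFactorial k : ℝ)) * (m:ℝ)^k := by
      calc ((m - w x).descFactorial k : ℝ) * (m:ℝ)^k
          ≤ (m.descFactorial k : ℝ) * (((m - w x : ℕ)) : ℝ)^k := h1
        _ ≤ (m.descFactorial k : ℝ) * ((1-ε)^k * (m:ℝ)^k) := by
            rw [← mul_pow]
            exact mul_le_mul_of_nonneg_left h2 (by positivity)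
        _ ≤ (m.descFactorial k : ℝ) * (Real.exp (-c) * (m:ℝ)^k) := by
            refine mul_le_mul_of_nonneg_left ?_ (by positivity)
            exact mul_le_mul_of_nonneg_right h4 (le_of_lt hkpos)
        _ = (Real.exp (-c) * (m.descFactorial k : ℝ)) * (m:ℝ)^k := by ring
    exact le_of_mul_le_mul_right hcomb hkpos
  have hdF0' : m.descFactorial k ≠ 0 := by
    intro h0
    exact absurd (Nat.descFactorial_eq_zero_iff_lt.mp h0) (not_lt.mpr hkm)
  have hdF0 : (m.descFactorial k : ℝ≥0∞) ≠ 0 := by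
    exact_mod_cast hdF0'
  have hfrac : (((m - w x).descFactorial k : ℝ≥0∞)) * ((m.descFactorial k : ℝ≥0∞))⁻¹
      ≤ ENNReal.ofReal (Real.exp (-c)) := by
    rw [← div_eq_mul_inv, ENNReal.div_le_iff hdF0 (by simp)]
    calc ((m - w x).descFactorial k : ℝ≥0∞)
        = ENNReal.ofReal (((m - w x).descFactorial k : ℕ) : ℝ) := by
          rw [ENNReal.ofReal_natCast]
      _ ≤ ENNReal.ofReal (Real.exp (-c) * ((m.descFactorial k : ℕ) : ℝ)) :=
          ENNReal.ofReal_le_ofReal hreal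
      _ = ENNReal.ofReal (Real.exp (-c)) * ENNReal.ofReal (((m.descFactorial k : ℕ)) : ℝ) :=
          ENNReal.ofReal_mul (Real.exp_nonneg _)
      _ = ENNReal.ofReal (Real.exp (-c)) * ((m.descFactorial k : ℕ) : ℝ≥0∞) := by
          rw [ENNReal.ofReal_natCast]
  have hcell_le : DHH.nu m (DHH.ordCell t₀) ≤ ((m.descFactorial k : ℝ≥0∞))⁻¹ := by
    rw [ENNReal.le_inv_iff_mul_le, mul_comm]
    exact hsum
  have hVc_final : DHH.nu m Vᶜ ≤ ENNReal.ofReal (Real.exp (-c)) := by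
    calc DHH.nu m Vᶜ ≤ (B.card : ℝ≥0∞) * DHH.nu m (DHH.ordCell t₀) := hVc_le
    _ ≤ (((m - w x).descFactorial k : ℕ) : ℝ≥0∞) * ((m.descFactorial k : ℝ≥0∞))⁻¹ := by
        refine mul_le_mul' ?_ hcell_le
        exact_mod_cast Nat.cast_le.mpr hBcard
    _ ≤ ENNReal.ofReal (Real.exp (-c)) := hfrac
  rw [hevent]
  have hμVc : μ (J ⁻¹' Vᶜ) ≤ ENNReal.ofReal (Real.exp (-c)) := by
    have hmv : μ (J ⁻¹' Vᶜ) = DHH.nu m Vᶜ := by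
      rw [← hjoint, Measure.map_apply hJmeas hVmeas.compl]
    rw [hmv]
    exact hVc_final
  have hprob : μ ((J ⁻¹' Vᶜ)ᶜ) = 1 - μ (J ⁻¹' Vᶜ) :=
    prob_compl_eq_one_sub (hJmeas hVmeas.compl)
  have hcc : (J ⁻¹' Vᶜ)ᶜ = J ⁻¹' V := by
    rw [← Set.preimage_compl, compl_compl]
  calc ENNReal.ofReal (1 - Real.exp (-c))
      = 1 - ENNReal.ofReal (Real.exp (-c)) := by
        rw [ENNReal.ofReal_sub 1 (Real.exp_nonneg _), ENNReal.ofReal_one]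
    _ ≤ 1 - μ (J ⁻¹' Vᶜ) := tsub_le_tsub_left hμVc 1
    _ = μ ((J ⁻¹' Vᶜ)ᶜ) := hprob.symm
    _ = μ (J ⁻¹' V) := by rw [hcc]
end

section
/- Consider a sequence of h independent Bernoulli(τ) trials with 0 < τ ≤ 1 and h ≥ 1, and let c denote the number of trials from the first success to the end of the sequence (inclusive), with c = 0 if there is no success. Define the estimator ĥ = 0 if c = 0 and ĥ = c - 1 + 1/τ if c ≥ 1. Then E[ĥ] = h; that is, the Sample-and-Hold estimator ĥ_x = c_x - 1 + 1/τ (set to 0 for uncached keys) is an unbiased estimator of the weight h_x of a key. -/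
open MeasureTheory ProbabilityTheory Set Finset

/-- The Sample-and-Hold counter of a key with `h` occurrences, given the Bernoulli
coin flips `X 0, …, X (h-1)` of the occurrences: the number of trials from the first
success to the end of the sequence (inclusive), i.e. `h - i` where `i` is the index
of the first success, and `0` if there is no success. -/
def shCounter {Ω : Type*} {h : ℕ} (X : Fin h → Ω → Bool) (ω : Ω) : ℕ :=
  Finset.univ.sup fun i : Fin h => if X i ω = true then h - (i : ℕ) else 0

/-- **the Sample-and-Hold estimator is unbiased.**
For `h ≥ 1` independent Bernoulli(τ) trials with `0 < τ ≤ 1` and counter `c` as in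
Statement 5, the estimator `ĥ = 0` if `c = 0` and `ĥ = c - 1 + 1/τ` if `c ≥ 1`
satisfies `E[ĥ] = h`. -/
theorem stmt_6 {Ω : Type*} [MeasurableSpace Ω] (μ : Measure Ω) [IsProbabilityMeasure μ]
    (τ : ℝ) (hτ0 : 0 < τ) (hτ1 : τ ≤ 1) (h : ℕ) (hh : 1 ≤ h)
    (X : Fin h → Ω → Bool) (hmeas : ∀ i, Measurable (X i))
    (hber : ∀ i, μ {ω | X i ω = true} = ENNReal.ofReal τ)
    (hindep : iIndepFun X μ) :
    ∫ ω, (if shCounter X ω = 0 then (0 : ℝ)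
        else (shCounter X ω : ℝ) - 1 + 1 / τ) ∂μ = (h : ℝ) := by
  classical
  set q : ℝ := 1 - τ with hqdef
  have hq0 : 0 ≤ q := by simp [hqdef]; linarith
  have hq1 : q < 1 := by simp [hqdef]; linarith
  -- probability of a single failure
  have hfalse : ∀ i, μ (X i ⁻¹' {false}) = ENNReal.ofReal q := by
    intro i
    have hc : X i ⁻¹' {false} = {ω | X i ω = true}ᶜ := by
      ext ω; cases hx : X i ω <;> simp [hx]
    have hmeasset : MeasurableSet {ω | X i ω = true} := by
      have he : {ω | X i ω = true} = X i ⁻¹' {true} := by ext ω; simp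
      rw [he]
      exact hmeas i (MeasurableSet.singleton true)
    rw [hc, measure_compl hmeasset (measure_ne_top μ _), hber i, measure_univ, hqdef,
      ENNReal.ofReal_sub 1 hτ0.le, ENNReal.ofReal_one]
  -- the index sets
  set S : ℕ → Finset (Fin h) := fun k => Finset.univ.filter fun i => (i : ℕ) + k ≤ h with hSdef
  have hScard : ∀ k, 1 ≤ k → k ≤ h → (S k).card = h - k + 1 := by
    intro k h1 h2
    rw [hSdef]
    simp only [Finset.card_filter]
    rw [Fin.sum_univ_eq_sum_range (fun n => if n + k ≤ h then 1 else 0)]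
    have : ((Finset.range h).filter fun n => n + k ≤ h) = Finset.range (h - k + 1) := by
      ext n; simp only [Finset.mem_filter, Finset.mem_range]; omega
    rw [← Finset.card_filter, this, Finset.card_range]
  -- the events
  set A : ℕ → Set Ω := fun k => (⋂ i ∈ S k, X i ⁻¹' {false})ᶜ with hAdef
  have hAmeas : ∀ k, MeasurableSet (A k) := fun k =>
    (Finset.measurableSet_biInter _ fun i _ => hmeas i (MeasurableSet.singleton false)).compl
  have hAmem : ∀ k ω, 0 < k → (ω ∈ A k ↔ k ≤ shCounter X ω) := by
    intro k ω hk
    rw [hAdef]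
    simp only [Set.mem_compl_iff, Set.mem_iInter, Set.mem_preimage, Set.mem_singleton_iff,
      not_forall, hSdef, Finset.mem_filter, Finset.mem_univ, true_and]
    rw [shCounter, Finset.le_sup_iff (show (⊥ : ℕ) < k from hk)]
    constructor
    · rintro ⟨i, hik, hxi⟩
      refine ⟨i, Finset.mem_univ i, ?_⟩
      have hxi' : X i ω = true := by
        cases hx : X i ω
        · exact absurd hx hxi
        · rfl
      rw [if_pos hxi']
      omega
    · rintro ⟨i, -, hi⟩
      by_cases hx : X i ω = true
      · rw [if_pos hx] at hi
        have := i.isLt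
        exact ⟨i, by omega, by simp [hx]⟩
      · rw [if_neg hx] at hi; omega
  -- probabilities of the events
  have hAprob : ∀ k, 1 ≤ k → k ≤ h → (μ (A k)).toReal = 1 - q ^ (h - k + 1) := by
    intro k h1 h2
    have hqpow : q ^ (h - k + 1) ≤ 1 := pow_le_one₀ hq0 hq1.le
    have hB : μ (⋂ i ∈ S k, X i ⁻¹' {false}) = ENNReal.ofReal (q ^ (h - k + 1)) := by
      rw [hindep.meas_biInter (fun i _ => ⟨{false}, trivial, rfl⟩)]
      rw [Finset.prod_congr rfl (fun i _ => hfalse i), Finset.prod_const, hScard k h1 h2,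
        ← ENNReal.ofReal_pow hq0]
    have hBmeas : MeasurableSet (⋂ i ∈ S k, X i ⁻¹' {false}) :=
      Finset.measurableSet_biInter _ fun i _ => hmeas i (MeasurableSet.singleton false)
    rw [hAdef]
    simp only
    rw [measure_compl hBmeas (measure_ne_top μ _), measure_univ, hB]
    rw [← ENNReal.ofReal_one, ← ENNReal.ofReal_sub 1 (pow_nonneg hq0 _),
      ENNReal.toReal_ofReal (by linarith)]
  -- pointwise decomposition of the estimator
  have hpt : ∀ ω, (if shCounter X ω = 0 then (0 : ℝ)
      else (shCounter X ω : ℝ) - 1 + 1 / τ)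
      = (∑ k ∈ Finset.Icc 1 h, (A k).indicator (fun _ => (1 : ℝ)) ω)
        + (1 / τ - 1) * (A 1).indicator (fun _ => (1 : ℝ)) ω := by
    intro ω
    have hle : shCounter X ω ≤ h := by
      apply Finset.sup_le
      intro i _
      split <;> omega
    set c := shCounter X ω with hc
    have hsum : ∑ k ∈ Finset.Icc 1 h, (A k).indicator (fun _ => (1 : ℝ)) ω = c := by
      have : ∀ k ∈ Finset.Icc 1 h, (A k).indicator (fun _ => (1 : ℝ)) ω
          = if k ≤ c then 1 else 0 := by
        intro k hk
        simp only [Finset.mem_Icc] at hk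
        rw [Set.indicator_apply]
        by_cases hkc : k ≤ c
        · rw [if_pos ((hAmem k ω (by omega)).2 hkc), if_pos hkc]
        · rw [if_neg (fun hmem => hkc ((hAmem k ω (by omega)).1 hmem)), if_neg hkc]
      rw [Finset.sum_congr rfl this, Finset.sum_boole]
      have : (Finset.Icc 1 h).filter (fun k => k ≤ c) = Finset.Icc 1 c := by
        ext k; simp only [Finset.mem_filter, Finset.mem_Icc]; omega
      rw [this, Nat.card_Icc]
      simp
    rw [hsum]
    by_cases hc0 : c = 0
    · rw [if_pos hc0, hc0]
      rw [Set.indicator_apply, if_neg (fun hmem => by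
        have := (hAmem 1 ω one_pos).1 hmem; omega)]
      simp
    · rw [if_neg hc0]
      rw [Set.indicator_apply, if_pos ((hAmem 1 ω one_pos).2 (by omega))]
      ring
  -- compute the integral
  have hint : ∀ k, Integrable ((A k).indicator (fun _ => (1 : ℝ))) μ :=
    fun k => (integrable_const (1 : ℝ)).indicator (hAmeas k)
  have hintegral : ∫ ω, (if shCounter X ω = 0 then (0 : ℝ)
      else (shCounter X ω : ℝ) - 1 + 1 / τ) ∂μ
      = (∑ k ∈ Finset.Icc 1 h, (μ (A k)).toReal)
        + (1 / τ - 1) * (μ (A 1)).toReal := by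
    rw [integral_congr_ae (Filter.Eventually.of_forall hpt)]
    rw [integral_add (integrable_finset_sum _ fun k _ => hint k) ((hint 1).const_mul _)]
    rw [integral_finset_sum _ fun k _ => hint k, integral_const_mul]
    congr 1
    · exact Finset.sum_congr rfl fun k _ => by
        rw [integral_indicator_const _ (hAmeas k)]; simp [Measure.real]
    · rw [integral_indicator_const _ (hAmeas 1)]; simp [Measure.real]
  rw [hintegral]
  rw [Finset.sum_congr rfl (fun k hk => by
    simp only [Finset.mem_Icc] at hk
    exact hAprob k hk.1 hk.2)]
  rw [hAprob 1 le_rfl hh]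
  have hh1 : h - 1 + 1 = h := by omega
  rw [hh1]
  -- sum of geometric terms
  have hgeom : ∑ k ∈ Finset.Icc 1 h, q ^ (h - k + 1) = q * ((q ^ h - 1) / (q - 1)) := by
    rw [← Finset.Ico_add_one_right_eq_Icc, Finset.sum_Ico_eq_sum_range]
    have e1 : ∀ i ∈ Finset.range (h + 1 - 1), q ^ (h - (1 + i) + 1) = q ^ (h - i) := by
      intro i hi
      simp only [Finset.mem_range] at hi
      congr 1
      omega
    rw [Finset.sum_congr rfl e1]
    have e2 : ∑ i ∈ Finset.range h, q ^ (h - i)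
        = ∑ i ∈ Finset.range h, q ^ (i + 1) := by
      rw [← Finset.sum_range_reflect (fun i => q ^ (i + 1)) h]
      refine Finset.sum_congr rfl fun i hi => ?_
      simp only [Finset.mem_range] at hi
      congr 1
      omega
    have hne : q ≠ 1 := ne_of_lt hq1
    simp only [Nat.add_sub_cancel]
    rw [e2]
    have : ∑ i ∈ Finset.range h, q ^ (i + 1) = q * ∑ i ∈ Finset.range h, q ^ i := by
      rw [Finset.mul_sum]
      exact Finset.sum_congr rfl fun i _ => by ring
    rw [this, geom_sum_eq hne]
  rw [Finset.sum_sub_distrib, Finset.sum_const, Nat.card_Icc, hgeom]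
  have hτne : τ ≠ 0 := ne_of_gt hτ0
  have hq1ne : q - 1 ≠ 0 := by
    intro hcon
    apply hτne
    linarith [hcon]
  have hq' : q - 1 = -τ := by rw [hqdef]; ring
  simp only [nsmul_eq_mul, mul_one, Nat.add_sub_cancel]
  have h2 : (1 / τ - 1 : ℝ) = q / τ := by
    rw [hqdef, sub_div, div_self hτne]
  have key : q * ((q ^ h - 1) / (q - 1)) = (1 / τ - 1) * (1 - q ^ h) := by
    rw [hq', h2]
    ring
  rw [key]
  ring
end

section
/- Let ρ > 0, let w ≥ 0 and h ≥ 0 be integers with w + h ≥ 1, let U_1, ..., U_w be independent Uniform[0,1] random variables, and let E_1, ..., E_h be independent random variables (also independent of the U_i) each distributed as 1 - (1 - V)^{1/ρ} for V Uniform[0,1]. Then the seed S = min(U_1, ..., U_w, E_1, ..., E_h) satisfies, for every τ in [0,1], P(S ≥ τ) = (1-τ)^{w + ρ·h}. Consequently, the seed of a key x in the combined weighted sampling scheme has cumulative distribution function 1 - (1-τ)^{b_x}, where b_x = ρ·h_x + w_x is the combined weight of x. -/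
open MeasureTheory ProbabilityTheory Set

/-- **distribution of the seed in combined weighted sampling.**
Let `ρ > 0` and `w + h ≥ 1`.  Let `X` be a family of `w + h` independent random
variables indexed by `Fin w ⊕ Fin h`: `X (inl i)` is Uniform[0,1] (the hash of the
`i`-th distinct pair of the key), and `X (inr j)` is distributed as
`1 - (1 - V) ^ (1/ρ)` for `V` Uniform[0,1] (the `erand` of the `j`-th element with
the key), expressed via pushforward measures.  Then the seed
`S = min_i X i` satisfies `P(S ≥ τ) = (1-τ) ^ (w + ρ·h)` for every `τ ∈ [0,1]`
(the event `S ≥ τ` is written `∀ i, τ ≤ X i`); i.e., the seed of a key with classic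
weight `h` and distinct weight `w` has CDF `1 - (1-τ)^(ρ·h + w)`. -/
theorem stmt_9 {Ω : Type*} [MeasurableSpace Ω] (μ : Measure Ω) [IsProbabilityMeasure μ]
    (ρ : ℝ) (hρ : 0 < ρ) (w h : ℕ) (hwh : 1 ≤ w + h)
    (X : Fin w ⊕ Fin h → Ω → ℝ) (hmeas : ∀ i, Measurable (X i))
    (hU : ∀ i : Fin w,
      Measure.map (X (Sum.inl i)) μ = (volume : Measure ℝ).restrict (Icc 0 1))
    (hE : ∀ j : Fin h,
      Measure.map (X (Sum.inr j)) μ =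
        Measure.map (fun v : ℝ => 1 - (1 - v) ^ (1 / ρ))
          ((volume : Measure ℝ).restrict (Icc 0 1)))
    (hindep : iIndepFun X μ) :
    ∀ τ ∈ Icc (0 : ℝ) 1,
      μ {ω | ∀ i, τ ≤ X i ω} =
        ENNReal.ofReal ((1 - τ) ^ ((w : ℝ) + ρ * (h : ℝ))) := by

  intro τ hτ
  obtain ⟨hτ0, hτ1⟩ := hτ
  have hfmeas : Measurable (fun v : ℝ => 1 - (1 - v) ^ (1 / ρ)) :=
    measurable_const.sub ((measurable_const.sub measurable_id).pow_const _)
  have h1τ0 : (0:ℝ) ≤ 1 - τ := by linarith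
  -- uniform coordinates
  have hUval : ∀ i : Fin w, μ (X (Sum.inl i) ⁻¹' Ici τ) = ENNReal.ofReal (1 - τ) := by
    intro i
    rw [← Measure.map_apply (hmeas _) measurableSet_Ici, hU i,
      Measure.restrict_apply measurableSet_Ici]
    have hs : Ici τ ∩ Icc (0:ℝ) 1 = Icc τ 1 := by
      ext x
      simp only [mem_inter_iff, mem_Ici, mem_Icc]
      constructor
      · rintro ⟨a, _, c⟩; exact ⟨a, c⟩
      · rintro ⟨a, b⟩; exact ⟨a, hτ0.trans a, b⟩
    rw [hs, Real.volume_Icc]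
  -- erand coordinates
  have hρτ1 : (1 - τ) ^ ρ ≤ 1 := Real.rpow_le_one h1τ0 (by linarith) hρ.le
  have hρτ0 : 0 ≤ (1 - τ) ^ ρ := Real.rpow_nonneg h1τ0 _
  have hEval : ∀ j : Fin h,
      μ (X (Sum.inr j) ⁻¹' Ici τ) = ENNReal.ofReal ((1 - τ) ^ ρ) := by
    intro j
    rw [← Measure.map_apply (hmeas _) measurableSet_Ici, hE j,
      Measure.map_apply hfmeas measurableSet_Ici,
      Measure.restrict_apply (hfmeas measurableSet_Ici)]
    have hs : (fun v : ℝ => 1 - (1 - v) ^ (1 / ρ)) ⁻¹' Ici τ ∩ Icc 0 1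
        = Icc (1 - (1 - τ) ^ ρ) 1 := by
      ext v
      simp only [mem_inter_iff, mem_preimage, mem_Ici, mem_Icc]
      constructor
      · rintro ⟨h1, h2, h3⟩
        refine ⟨?_, h3⟩
        have hv1 : (0:ℝ) ≤ 1 - v := by linarith
        have h4 : (1 - v) ^ (1/ρ) ≤ 1 - τ := by linarith
        have h5 : ((1 - v) ^ (1/ρ)) ^ ρ ≤ (1 - τ) ^ ρ :=
          Real.rpow_le_rpow (Real.rpow_nonneg hv1 _) h4 hρ.le
        rw [← Real.rpow_mul hv1, one_div, inv_mul_cancel₀ hρ.ne', Real.rpow_one] at h5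
        linarith
      · rintro ⟨h1, h2⟩
        have hv1 : (0:ℝ) ≤ 1 - v := by linarith
        have h4 : 1 - v ≤ (1 - τ) ^ ρ := by linarith
        have h5 : (1 - v) ^ (1/ρ) ≤ ((1 - τ) ^ ρ) ^ (1/ρ) :=
          Real.rpow_le_rpow hv1 h4 (by positivity)
        rw [← Real.rpow_mul h1τ0, mul_one_div, div_self hρ.ne', Real.rpow_one] at h5
        exact ⟨by linarith, by linarith, h2⟩
    rw [hs, Real.volume_Icc]
    norm_num
  -- independence
  have hset : {ω | ∀ i, τ ≤ X i ω} = ⋂ i, X i ⁻¹' Ici τ := by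
    ext ω; simp [mem_iInter]
  rw [hset, hindep.meas_iInter (fun i => ⟨Ici τ, measurableSet_Ici, rfl⟩),
    Fintype.prod_sum_type]
  simp only [hUval, hEval, Finset.prod_const, Finset.card_univ, Fintype.card_fin]
  rw [← ENNReal.ofReal_pow h1τ0, ← ENNReal.ofReal_pow hρτ0,
    ← ENNReal.ofReal_mul (by positivity)]
  congr 1
  rcases eq_or_lt_of_le hτ1 with heq | hlt
  · subst heq
    have hz : (1:ℝ) - 1 = 0 := by norm_num
    have hexp : (0:ℝ) < (w:ℝ) + ρ * h := by
      rcases Nat.eq_zero_or_pos w with hw | hw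
      · have hh : (1:ℝ) ≤ h := by exact_mod_cast (by omega : 1 ≤ h)
        have h2 : ρ ≤ ρ * h := le_mul_of_one_le_right hρ.le hh
        have hw0 : (0:ℝ) ≤ w := Nat.cast_nonneg _
        linarith
      · have h1 : (1:ℝ) ≤ w := by exact_mod_cast hw
        have h2 : (0:ℝ) ≤ ρ * h := by positivity
        linarith
    rw [hz, Real.zero_rpow hρ.ne', Real.zero_rpow hexp.ne']
    rcases Nat.eq_zero_or_pos w with hw | hw
    · rw [zero_pow (by omega : h ≠ 0)]; ring
    · rw [zero_pow (by omega : w ≠ 0)]; ring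
  · have hb : (0:ℝ) < 1 - τ := by linarith
    rw [← Real.rpow_natCast (1 - τ) w, ← Real.rpow_natCast ((1 - τ) ^ ρ) h,
      ← Real.rpow_mul hb.le, ← Real.rpow_add hb]
end
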